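/- arXiv:1004.0327 — 8 statements merged into one kernel-verified Lean document; each statement's English description precedes it below -/
import Mathlib

section
/- Let a and s be integers with a ≥ 2 and s ≥ 2, and set g = (s+1)a and m = s(a+1). Equip ℤ² with the symmetric bilinear form ⟨(x₁,y₁),(x₂,y₂)⟩ = (2s−2)x₁x₂ + m(x₁y₂ + x₂y₁) + (2g−2)y₁y₂, and write L = (1,0), Λ = (0,1). Let α, β be integers and set M = (α,β) and N = (1−α,−β), so that M + N = L. If ⟨M,M⟩ ≥ 0, ⟨N,N⟩ ≥ 0, ⟨M,Λ⟩ ≥ 0, ⟨N,Λ⟩ ≥ 0, ⟨M,L⟩ ≥ 0 and ⟨N,L⟩ ≥ 0, then (α,β) = (0,0) or (α,β) = (1,0). In other words, L admits no nontrivial decomposition L = M + N into two classes satisfying all of these inequalities. -/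
private lemma le_of_sq_le_sq' (k p : ℤ) (hk : 0 ≤ k) (hp : 0 ≤ p) (h : k^2 ≤ p^2) : k ≤ p := by
  by_contra hlt
  push_neg at hlt
  have : p^2 < k^2 := by
    apply pow_lt_pow_left₀ hlt hp
    norm_num
  omega

set_option maxHeartbeats 1000000 in
private lemma key_case (a s α β : ℤ) (ha : 2 ≤ a) (hs : 2 ≤ s) (hβ : 1 ≤ β)
    (hMM : 0 ≤ (2*s-2)*α*α + 2*(s*(a+1))*α*β + (2*((s+1)*a)-2)*β*β)
    (hML : 0 ≤ (2*s-2)*α + s*(a+1)*β)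
    (hNN : 0 ≤ (2*s-2)*(1-α)*(1-α) - 2*(s*(a+1))*(1-α)*β + (2*((s+1)*a)-2)*β*β)
    (hNL : 0 ≤ (2*s-2)*(1-α) - s*(a+1)*β) : False := by
  set x := (2*s-2)*α + s*(a+1)*β with hx
  set y := (2*s-2)*(1-α) - s*(a+1)*β with hy
  set D := s^2*(a-1)^2 + 4*(a+s-1) with hD
  have hs2 : (0:ℤ) ≤ 2*s-2 := by linarith
  have h1 : D*β^2 ≤ x^2 := by
    nlinarith [mul_nonneg hs2 hMM]
  have h2 : D*β^2 ≤ y^2 := by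
    nlinarith [mul_nonneg hs2 hNN]
  have hDpos : 0 < D := by nlinarith [sq_nonneg (s*(a-1))]
  have hk : 0 ≤ D*β^2 := by positivity
  have hprod : (D*β^2)^2 ≤ x^2*y^2 := by
    calc (D*β^2)^2 = (D*β^2)*(D*β^2) := sq (D*β^2) ▸ rfl
    _ ≤ x^2*y^2 := mul_le_mul h1 h2 hk (by positivity)
  have hxy : D*β^2 ≤ x*y := by
    apply le_of_sq_le_sq' _ _ hk (mul_nonneg hML hNL)
    calc (D*β^2)^2 ≤ x^2*y^2 := hprod
    _ = (x*y)^2 := by ring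
  -- (x+y)^2 ≥ 4xy ≥ 4Dβ², x+y = 2s-2, D > (s-1)², β² ≥ 1 : contradiction
  have hsum : x + y = 2*s - 2 := by ring
  have hb2 : 1 ≤ β^2 := by nlinarith
  nlinarith [sq_nonneg (x - y), mul_nonneg hDpos.le (by nlinarith : (0:ℤ) ≤ β^2 - 1),
    mul_nonneg (mul_nonneg (by positivity : (0:ℤ) ≤ s*s) (by nlinarith : (0:ℤ) ≤ a*(a-2))) (by norm_num : (0:ℤ) ≤ 1)]

/-- The symmetric bilinear form on `ℤ²` with Gram matrix `[[2s-2, m], [m, 2g-2]]`,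
i.e. the intersection form on `Pic S = ℤL ⊕ ℤΛ` with `L² = 2s-2`, `Λ² = 2g-2`, `L·Λ = m`. -/
def picForm (s m g : ℤ) (v w : ℤ × ℤ) : ℤ :=
  (2 * s - 2) * v.1 * w.1 + m * (v.1 * w.2 + w.1 * v.2) + (2 * g - 2) * v.2 * w.2

theorem no_nontrivial_decomposition
    (a s : ℤ) (ha : 2 ≤ a) (hs : 2 ≤ s)
    (g m : ℤ) (hg : g = (s + 1) * a) (hm : m = s * (a + 1))
    (α β : ℤ) (L Λ M N : ℤ × ℤ)
    (hL : L = (1, 0)) (hΛ : Λ = (0, 1)) (hM : M = (α, β)) (hN : N = (1 - α, -β))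
    (hMM : 0 ≤ picForm s m g M M) (hNN : 0 ≤ picForm s m g N N)
    (hMΛ : 0 ≤ picForm s m g M Λ) (hNΛ : 0 ≤ picForm s m g N Λ)
    (hML : 0 ≤ picForm s m g M L) (hNL : 0 ≤ picForm s m g N L) :
    (α = 0 ∧ β = 0) ∨ (α = 1 ∧ β = 0) := by
  subst hL hΛ hM hN hg hm
  simp only [picForm] at *
  rcases lt_trichotomy β 0 with hb | hb | hb
  · exact (key_case a s (1-α) (-β) ha hs (by omega)
      (by nlinarith) (by nlinarith) (by nlinarith) (by nlinarith)).elim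
  · subst hb
    have h1 : 0 ≤ α := by nlinarith
    have h2 : α ≤ 1 := by nlinarith
    omega
  · exact (key_case a s α β ha hs (by omega)
      (by nlinarith) (by nlinarith) (by nlinarith) (by nlinarith)).elim
end

section
/- Let a ≥ 2 and d ≥ 1 be integers. For 0 ≤ i ≤ ⌊(a−1)/2⌋ define the nonnegative rational T_i(a,d) = [((2a−2)d + a − 1)! / ((2a−2)d + 2i)!] · [d(d−1)⋯(d−i+1)] · [(a−1)!/(a−1−2i)!] · (1/i!), where the falling factorial d(d−1)⋯(d−i+1) is interpreted as 0 when i > d. Then the alternating sum Q(a,d) = Σ_{i=0}^{⌊(a−1)/2⌋} (−1)^i T_i(a,d) is strictly positive. -/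
/-- The `i`-th term `T_i(a,d)` of the alternating sum `Q(a,d)`:
`T_i(a,d) = ((2a−2)d + a − 1)! / ((2a−2)d + 2i)! · d(d−1)⋯(d−i+1) · (a−1)!/(a−1−2i)! · 1/i!`,
where the falling factorial `d(d−1)⋯(d−i+1)` is `0` when `i > d`. -/
def secTerm (a d i : ℕ) : ℚ :=
  (((2 * a - 2) * d + a - 1).factorial : ℚ) / (((2 * a - 2) * d + 2 * i).factorial : ℚ)
    * (d.descFactorial i : ℚ)
    * (((a - 1).factorial : ℚ) / ((a - 1 - 2 * i).factorial : ℚ))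
    * (1 / (i.factorial : ℚ))

/-- The alternating sum `Q(a,d) = Σ_{i=0}^{⌊(a−1)/2⌋} (−1)^i T_i(a,d)`. -/
def secQ (a d : ℕ) : ℚ :=
  ∑ i ∈ Finset.range ((a - 1) / 2 + 1), (-1 : ℚ) ^ i * secTerm a d i

lemma secTerm_nonneg (a d i : ℕ) : 0 ≤ secTerm a d i := by
  unfold secTerm; positivity

lemma secTerm_zero_pos (a d : ℕ) : 0 < secTerm a d 0 := by
  unfold secTerm
  simp only [Nat.descFactorial_zero, Nat.cast_one]
  positivity

lemma secTerm_eq (a d i : ℕ) :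
    secTerm a d i =
      ((((2 * a - 2) * d + a - 1).factorial * d.descFactorial i * (a - 1).factorial : ℕ) : ℚ) /
      ((((2 * a - 2) * d + 2 * i).factorial * (a - 1 - 2 * i).factorial * i.factorial : ℕ) : ℚ) := by
  have h1 : (((2 * a - 2) * d + 2 * i).factorial : ℚ) ≠ 0 := by positivity
  have h2 : ((a - 1 - 2 * i).factorial : ℚ) ≠ 0 := by positivity
  have h3 : ((i.factorial : ℚ)) ≠ 0 := by positivity
  unfold secTerm
  push_cast
  field_simp

lemma secKey (a d i : ℕ) (ha : 2 ≤ a) (hd : 1 ≤ d) :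
    (d - i) * ((a - 1 - 2 * (i + 1) + 1) * (a - 1 - 2 * (i + 1) + 1 + 1)) <
      (i + 1) * (((2 * a - 2) * d + 2 * i + 1) * ((2 * a - 2) * d + 2 * i + 1 + 1)) := by
  obtain ⟨m, rfl⟩ : ∃ m, a = m + 2 := ⟨a - 2, by omega⟩
  have hX : m + 1 ≤ (m + 1) * d := Nat.le_mul_of_pos_right _ hd
  have h1 : (d - i) * ((m + 2 - 1 - 2 * (i + 1) + 1) * (m + 2 - 1 - 2 * (i + 1) + 1 + 1)) ≤
      d * ((m + 1) * (m + 2)) := by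
    apply Nat.mul_le_mul (Nat.sub_le _ _)
    apply Nat.mul_le_mul <;> omega
  have h2 : d * ((m + 1) * (m + 2)) < (2 * (m + 1) * d + 1) * (2 * (m + 1) * d + 2) := by
    nlinarith [hX, Nat.mul_le_mul_left ((m+1)*d) (show m ≤ (m+1)*d by omega)]
  have h3 : (2 * (m + 2) - 2) * d = 2 * (m+1) * d := by rw [show 2*(m+2)-2 = 2*(m+1) from by omega]
  calc (d - i) * ((m + 2 - 1 - 2 * (i + 1) + 1) * (m + 2 - 1 - 2 * (i + 1) + 1 + 1))
      ≤ d * ((m + 1) * (m + 2)) := h1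
    _ < (2 * (m + 1) * d + 1) * (2 * (m + 1) * d + 2) := h2
    _ ≤ (i + 1) * (((2 * (m + 2) - 2) * d + 2 * i + 1) * ((2 * (m + 2) - 2) * d + 2 * i + 1 + 1)) := by
        rw [h3]
        have : (2 * (m + 1) * d + 1) * (2 * (m + 1) * d + 2) ≤
            (2 * (m + 1) * d + 2 * i + 1) * (2 * (m + 1) * d + 2 * i + 1 + 1) := by
          apply Nat.mul_le_mul <;> omega
        calc (2 * (m + 1) * d + 1) * (2 * (m + 1) * d + 2)
            ≤ (2 * (m + 1) * d + 2 * i + 1) * (2 * (m + 1) * d + 2 * i + 1 + 1) := this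
          _ ≤ (i + 1) * _ := Nat.le_mul_of_pos_left _ (by omega)


lemma secTerm_succ_le (a d i : ℕ) (ha : 2 ≤ a) (hd : 1 ≤ d) (hi : 2 * (i + 1) ≤ a - 1) :
    secTerm a d (i + 1) ≤ secTerm a d i := by
  rw [secTerm_eq, secTerm_eq, div_le_div_iff₀ (by positivity) (by positivity),
    ← Nat.cast_mul, ← Nat.cast_mul, Nat.cast_le]
  have e1 : (2 * a - 2) * d + 2 * (i + 1) = ((2 * a - 2) * d + 2 * i + 1) + 1 := by ring
  have e2 : a - 1 - 2 * i = (a - 1 - 2 * (i + 1) + 1) + 1 := by omega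
  rw [e1, e2, Nat.descFactorial_succ]
  simp only [Nat.factorial_succ]
  have key := (secKey a d i ha hd).le
  calc ((2 * a - 2) * d + a - 1).factorial * ((d - i) * d.descFactorial i) * (a - 1).factorial *
        (((2 * a - 2) * d + 2 * i).factorial *
          ((a - 1 - 2 * (i + 1) + 1 + 1) * ((a - 1 - 2 * (i + 1) + 1) * (a - 1 - 2 * (i + 1)).factorial)) *
          i.factorial)
      = (((2 * a - 2) * d + a - 1).factorial * d.descFactorial i * (a - 1).factorial *
          (((2 * a - 2) * d + 2 * i).factorial * (a - 1 - 2 * (i + 1)).factorial * i.factorial)) *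
        ((d - i) * ((a - 1 - 2 * (i + 1) + 1) * (a - 1 - 2 * (i + 1) + 1 + 1))) := by ring
    _ ≤ (((2 * a - 2) * d + a - 1).factorial * d.descFactorial i * (a - 1).factorial *
          (((2 * a - 2) * d + 2 * i).factorial * (a - 1 - 2 * (i + 1)).factorial * i.factorial)) *
        ((i + 1) * (((2 * a - 2) * d + 2 * i + 1) * ((2 * a - 2) * d + 2 * i + 1 + 1))) :=
        Nat.mul_le_mul_left _ key
    _ = ((2 * a - 2) * d + a - 1).factorial * d.descFactorial i * (a - 1).factorial *
        (((2 * a - 2) * d + 2 * i + 1 + 1) * (((2 * a - 2) * d + 2 * i + 1) * ((2 * a - 2) * d + 2 * i).factorial) *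
          (a - 1 - 2 * (i + 1)).factorial * ((i + 1) * i.factorial)) := by ring

lemma secTerm_one_lt (a d : ℕ) (ha : 3 ≤ a) (hd : 1 ≤ d) :
    secTerm a d 1 < secTerm a d 0 := by
  rw [secTerm_eq, secTerm_eq, div_lt_div_iff₀ (by positivity) (by positivity),
    ← Nat.cast_mul, ← Nat.cast_mul, Nat.cast_lt]
  have e1 : (2 * a - 2) * d + 2 * 1 = ((2 * a - 2) * d + 2 * 0 + 1) + 1 := by ring
  have e2 : a - 1 - 2 * 0 = (a - 1 - 2 * (0 + 1) + 1) + 1 := by omega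
  rw [e1, e2, show (1:ℕ) = 0 + 1 from rfl, Nat.descFactorial_succ]
  simp only [Nat.factorial_succ]
  have key := secKey a d 0 (by omega) hd
  have C : 0 < ((2 * a - 2) * d + a - 1).factorial * d.descFactorial 0 * (a - 1).factorial *
      (((2 * a - 2) * d + 2 * 0).factorial * (a - 1 - 2 * (0 + 1)).factorial * Nat.factorial 0) := by
    simp only [Nat.descFactorial_zero]
    positivity
  calc ((2 * a - 2) * d + a - 1).factorial * ((d - 0) * d.descFactorial 0) * (a - 1).factorial *
        (((2 * a - 2) * d + 2 * 0).factorial *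
          ((a - 1 - 2 * (0 + 1) + 1 + 1) * ((a - 1 - 2 * (0 + 1) + 1) * (a - 1 - 2 * (0 + 1)).factorial)) *
          Nat.factorial 0)
      = (((2 * a - 2) * d + a - 1).factorial * d.descFactorial 0 * (a - 1).factorial *
          (((2 * a - 2) * d + 2 * 0).factorial * (a - 1 - 2 * (0 + 1)).factorial * Nat.factorial 0)) *
        ((d - 0) * ((a - 1 - 2 * (0 + 1) + 1) * (a - 1 - 2 * (0 + 1) + 1 + 1))) := by ring
    _ < (((2 * a - 2) * d + a - 1).factorial * d.descFactorial 0 * (a - 1).factorial *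
          (((2 * a - 2) * d + 2 * 0).factorial * (a - 1 - 2 * (0 + 1)).factorial * Nat.factorial 0)) *
        ((0 + 1) * (((2 * a - 2) * d + 2 * 0 + 1) * ((2 * a - 2) * d + 2 * 0 + 1 + 1))) :=
        mul_lt_mul_of_pos_left key C
    _ = ((2 * a - 2) * d + a - 1).factorial * d.descFactorial 0 * (a - 1).factorial *
        (((2 * a - 2) * d + 2 * 0 + 1 + 1) * (((2 * a - 2) * d + 2 * 0 + 1) * ((2 * a - 2) * d + 2 * 0).factorial) *
          (a - 1 - 2 * (0 + 1)).factorial * ((0 + 1) * Nat.factorial 0)) := by ring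

lemma alt_split (f : ℕ → ℚ) (n : ℕ) :
    ∑ i ∈ Finset.range (n + 1), (-1 : ℚ) ^ i * f i
      = f 0 - ∑ i ∈ Finset.range n, (-1 : ℚ) ^ i * f (i + 1) := by
  rw [Finset.sum_range_succ']
  rw [Finset.sum_congr rfl (fun i _ => show (-1 : ℚ) ^ (i + 1) * f (i + 1)
      = -((-1 : ℚ) ^ i * f (i + 1)) from by ring)]
  rw [Finset.sum_neg_distrib]
  ring

lemma alt_bounds : ∀ (n : ℕ) (f : ℕ → ℚ),
    (∀ i, i + 1 < n → f (i + 1) ≤ f i) → (∀ i, i < n → 0 ≤ f i) →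
    0 ≤ (∑ i ∈ Finset.range n, (-1 : ℚ) ^ i * f i) ∧
      (1 ≤ n → (∑ i ∈ Finset.range n, (-1 : ℚ) ^ i * f i) ≤ f 0) := by
  intro n
  induction n with
  | zero => intro f _ _; simp
  | succ n ih =>
    intro f hmono hpos
    rw [alt_split]
    obtain ⟨h0, h1⟩ := ih (fun i => f (i + 1)) (fun i h => hmono (i + 1) (by omega))
      (fun i h => hpos (i + 1) (by omega))
    rcases Nat.eq_zero_or_pos n with rfl | hn
    · constructor
      · simpa using hpos 0 (by omega)
      · intro _; simp
    · have hf1 : (∑ i ∈ Finset.range n, (-1 : ℚ) ^ i * f (i + 1)) ≤ f 1 := h1 hn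
      have hle : f 1 ≤ f 0 := hmono 0 (by omega)
      exact ⟨by linarith, fun _ => by linarith⟩

theorem secQ_pos (a d : ℕ) (ha : 2 ≤ a) (hd : 1 ≤ d) : 0 < secQ a d := by
  unfold secQ
  rcases Nat.eq_zero_or_pos ((a - 1) / 2) with h | h
  · rw [h, Finset.sum_range_one]
    simpa using secTerm_zero_pos a d
  · have ha3 : 3 ≤ a := by omega
    rw [alt_split]
    obtain ⟨h0, h1⟩ := alt_bounds ((a - 1) / 2) (fun i => secTerm a d (i + 1))
      (fun i hik => secTerm_succ_le a d (i + 1) ha hd (by omega))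
      (fun i _ => secTerm_nonneg a d (i + 1))
    have hT1 := h1 h
    have := secTerm_one_lt a d ha3 hd
    linarith
end

section
/- Let a ≥ 2 and d ≥ 1 be integers, and for 0 ≤ i ≤ ⌊(a−1)/2⌋ define T_i(a,d) = [((2a−2)d + a − 1)! / ((2a−2)d + 2i)!] · [d(d−1)⋯(d−i+1)] · [(a−1)!/(a−1−2i)!] · (1/i!), with the falling factorial d(d−1)⋯(d−i+1) interpreted as 0 when i > d. Then for every i with i + 1 ≤ min(⌊(a−1)/2⌋, d), one has T_{i+1}(a,d) < T_i(a,d); that is, consecutive summands of the alternating sum Q(a,d) = Σ_i (−1)^i T_i(a,d) strictly decrease in absolute value. -/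
set_option maxHeartbeats 1000000 in
theorem secTerm_strict_anti (a d : ℕ) (ha : 2 ≤ a) (hd : 1 ≤ d)
    (i : ℕ) (hi : i + 1 ≤ min ((a - 1) / 2) d) :
    secTerm a d (i + 1) < secTerm a d i := by
  rw [le_min_iff] at hi
  obtain ⟨hi1, hi2⟩ := hi
  have hi1' : 2 * (i + 1) ≤ a - 1 := by omega
  obtain ⟨e, rfl⟩ : ∃ e, a = 2 * i + 3 + e := ⟨a - (2*i+3), by omega⟩
  obtain ⟨f, rfl⟩ : ∃ f, d = i + 1 + f := ⟨d - (i+1), by omega⟩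
  simp only [secTerm]
  have s0 : 2 * (2*i+3+e) - 2 = 4*i+4+2*e := by omega
  have s1 : 2*i+3+e - 1 = 2*i+2+e := by omega
  have s2 : 2*i+2+e - 2*i = e+2 := by omega
  have s3 : 2*i+2+e - 2*(i+1) = e := by omega
  have s4 : ∀ n : ℕ, n + (2*i+3+e) - 1 = n + (2*i+2+e) := fun n => by omega
  simp only [s0, s1, s2, s3, s4]
  set N : ℕ := (4*i+4+2*e) * (i+1+f) with hN
  -- factorial identities over ℚ
  have q1 : ((N + 2*(i+1)).factorial : ℚ)
      = ((N + 2*i).factorial : ℚ) * (((N+2*i+1 : ℕ) : ℚ) * ((N+2*i+2 : ℕ) : ℚ)) := by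
    have h : N + 2*(i+1) = (N + 2*i) + 1 + 1 := by omega
    rw [h, Nat.factorial_succ, Nat.factorial_succ]
    push_cast; ring
  have q2 : (((i+1+f).descFactorial (i+1) : ℕ) : ℚ)
      = ((f+1 : ℕ) : ℚ) * (((i+1+f).descFactorial i : ℕ) : ℚ) := by
    rw [Nat.descFactorial_succ, show i + 1 + f - i = f + 1 by omega]
    push_cast; ring
  have q3 : ((e+2).factorial : ℚ)
      = (e.factorial : ℚ) * (((e+1 : ℕ) : ℚ) * ((e+2 : ℕ) : ℚ)) := by
    rw [show e+2 = e+1+1 from rfl, Nat.factorial_succ, Nat.factorial_succ]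
    push_cast; ring
  have q4 : ((i+1).factorial : ℚ) = (i.factorial : ℚ) * ((i+1 : ℕ) : ℚ) := by
    rw [Nat.factorial_succ]; push_cast; ring
  rw [q1, q2, q3, q4]
  -- name the atoms
  set P : ℚ := ((N + (2*i+2+e)).factorial : ℚ) with hP
  set F : ℚ := ((N + 2*i).factorial : ℚ) with hF
  set D : ℚ := (((i+1+f).descFactorial i : ℕ) : ℚ) with hD
  set A : ℚ := ((2*i+2+e).factorial : ℚ) with hA
  set E : ℚ := (e.factorial : ℚ) with hE
  set I : ℚ := (i.factorial : ℚ) with hI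
  set n1 : ℚ := ((N+2*i+1 : ℕ) : ℚ) with hn1
  set n2 : ℚ := ((N+2*i+2 : ℕ) : ℚ) with hn2
  set c1 : ℚ := ((e+1 : ℕ) : ℚ) with hc1
  set c2 : ℚ := ((e+2 : ℕ) : ℚ) with hc2
  set f1 : ℚ := ((f+1 : ℕ) : ℚ) with hf1
  set i1 : ℚ := ((i+1 : ℕ) : ℚ) with hi1''
  -- positivity of atoms
  have pP : 0 < P := by rw [hP]; exact_mod_cast Nat.factorial_pos _
  have pF : 0 < F := by rw [hF]; exact_mod_cast Nat.factorial_pos _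
  have pD : 0 < D := by
    rw [hD]
    have hne : (i+1+f).descFactorial i ≠ 0 := by
      simp only [ne_eq, Nat.descFactorial_eq_zero_iff_lt]; omega
    exact_mod_cast Nat.pos_of_ne_zero hne
  have pA : 0 < A := by rw [hA]; exact_mod_cast Nat.factorial_pos _
  have pE : 0 < E := by rw [hE]; exact_mod_cast Nat.factorial_pos _
  have pI : 0 < I := by rw [hI]; exact_mod_cast Nat.factorial_pos _
  have pn1 : 0 < n1 := by rw [hn1]; exact_mod_cast Nat.succ_pos _
  have pn2 : 0 < n2 := by rw [hn2]; exact_mod_cast Nat.succ_pos _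
  have pc1 : 0 < c1 := by rw [hc1]; exact_mod_cast Nat.succ_pos _
  have pc2 : 0 < c2 := by rw [hc2]; exact_mod_cast Nat.succ_pos _
  have pf1 : 0 < f1 := by rw [hf1]; exact_mod_cast Nat.succ_pos _
  have pi1 : 0 < i1 := by rw [hi1'']; exact_mod_cast Nat.succ_pos _
  -- the key numeric inequality, first in ℕ
  have hNge : 4*i+4+2*e ≤ N := by
    calc 4*i+4+2*e = (4*i+4+2*e)*1 := by ring
      _ ≤ N := by rw [hN]; exact Nat.mul_le_mul_left _ (by omega)
  have h1 : (e+2)*(f+1) ≤ N := by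
    rw [hN]; exact Nat.mul_le_mul (by omega) (by omega)
  have hb : e+1 < (N+2*i+2)*(i+1) := by
    calc e+1 < N+2*i+2 := by omega
      _ = (N+2*i+2)*1 := by ring
      _ ≤ (N+2*i+2)*(i+1) := Nat.mul_le_mul_left _ (by omega)
  have hlt : (f+1)*((e+1)*(e+2)) < (N+2*i+1)*(N+2*i+2)*(i+1) := by
    calc (f+1)*((e+1)*(e+2)) = (e+1)*((e+2)*(f+1)) := by ring
      _ ≤ (e+1)*N := Nat.mul_le_mul_left _ h1
      _ < ((N+2*i+2)*(i+1)) * (N+2*i+1) :=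
          mul_lt_mul' hb.le (by omega) (Nat.zero_le _) (by positivity)
      _ = (N+2*i+1)*(N+2*i+2)*(i+1) := by ring
  have hr : f1 / (n1*n2*i1) < 1 / (c1*c2) := by
    rw [div_lt_div_iff₀ (by positivity) (by positivity), one_mul,
      hf1, hn1, hn2, hc1, hc2, hi1'']
    exact_mod_cast hlt
  have hX : 0 < P/F * D * (A/E) * (1/I) := by positivity
  calc P/(F*(n1*n2)) * (f1*D) * (A/E) * (1/(I*i1))
      = (P/F * D * (A/E) * (1/I)) * (f1 / (n1*n2*i1)) := by ring
    _ < (P/F * D * (A/E) * (1/I)) * (1 / (c1*c2)) := by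
        exact mul_lt_mul_of_pos_left hr hX
    _ = P/F * D * (A/(E*(c1*c2))) * (1/I) := by ring
end

section
/- Let a ≥ 2 and d ≥ 1 be integers. Then the following identity of rational numbers holds: [(2ad)!·(2ad−2d+a−1)! / ((2ad−2d)!·d!·(2ad−d+a−1)!)] · Σ_{k=0}^{d} [((1−a)/2)_k · ((2−a)/2)_k · (−d)_k] / [(ad−d+1/2)_k · (ad−d+1)_k · k!] = [(2ad)! / ((2ad−d+a−1)!·d!)] · Σ_{i=0}^{⌊(a−1)/2⌋} (−1)^i · [((2a−2)d + a − 1)! / ((2a−2)d + 2i)!] · [d(d−1)⋯(d−i+1)] · [(a−1)!/(a−1−2i)!] · (1/i!), where (x)_k = x(x+1)⋯(x+k−1) denotes the rising factorial and the falling factorial d(d−1)⋯(d−i+1) is 0 when i > d. -/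
/- ### Auxiliary lemmas -/

lemma evalAsc (k : ℕ) (x : ℚ) :
    (ascPochhammer ℚ k).eval x = ∏ j ∈ Finset.range k, (x + j) := by
  induction k with
  | zero => simp
  | succ n ih =>
      rw [ascPochhammer_succ_right, Polynomial.eval_mul, ih, Finset.prod_range_succ]
      simp

lemma prod_asc_mul (e m : ℕ) :
    (e.factorial : ℚ) * ∏ j ∈ Finset.range m, ((e : ℚ) + 1 + j)
      = ((e + m).factorial : ℚ) := by
  induction m with
  | zero => simp
  | succ n ih =>
      rw [Finset.prod_range_succ, show e + (n + 1) = (e + n) + 1 from rfl,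
        Nat.factorial_succ]
      push_cast
      linear_combination ((e : ℚ) + 1 + n) * ih

lemma prod_negdesc (n k : ℕ) (h : k ≤ n) :
    ((n - k).factorial : ℚ) * ∏ j ∈ Finset.range k, (-(n : ℚ) + j)
      = (-1) ^ k * (n.factorial : ℚ) := by
  induction k with
  | zero => simp
  | succ m ih =>
      have hm : m ≤ n := by omega
      have key : ((n - m).factorial : ℚ)
          = ((n - (m + 1)).factorial : ℚ) * ((n : ℚ) - m) := by
        rw [show n - m = (n - (m + 1)) + 1 by omega, Nat.factorial_succ]
        have hc : ((n - (m + 1) : ℕ) : ℚ) = (n : ℚ) - (m + 1) := by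
          rw [Nat.cast_sub h]; push_cast; ring
        push_cast [hc]; ring
      rw [Finset.prod_range_succ]
      have ih' := ih hm
      rw [pow_succ]
      linear_combination (∏ j ∈ Finset.range m, (-(n : ℚ) + j)) * key - ih'

lemma prod_negdesc' (n k : ℕ) (h : k ≤ n) :
    ∏ j ∈ Finset.range k, (-(n : ℚ) + j)
      = (-1) ^ k * (n.factorial : ℚ) / ((n - k).factorial : ℚ) := by
  have hf : ((n - k).factorial : ℚ) ≠ 0 := Nat.cast_ne_zero.mpr (Nat.factorial_ne_zero _)
  rw [eq_div_iff hf]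
  linear_combination prod_negdesc n k h

lemma prod_asc' (e m : ℕ) :
    ∏ j ∈ Finset.range m, ((e : ℚ) + 1 + j)
      = ((e + m).factorial : ℚ) / (e.factorial : ℚ) := by
  have hf : ((e).factorial : ℚ) ≠ 0 := Nat.cast_ne_zero.mpr (Nat.factorial_ne_zero _)
  rw [eq_div_iff hf]
  linear_combination prod_asc_mul e m

lemma prod_pair (x : ℚ) (k : ℕ) :
    (4 : ℚ) ^ k * ((∏ j ∈ Finset.range k, (x / 2 + j))
        * (∏ j ∈ Finset.range k, ((x + 1) / 2 + j)))
      = ∏ j ∈ Finset.range (2 * k), (x + j) := by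
  induction k with
  | zero => simp
  | succ n ih =>
      rw [Finset.prod_range_succ, Finset.prod_range_succ,
        show 2 * (n + 1) = (2 * n + 1) + 1 from rfl, Finset.prod_range_succ,
        Finset.prod_range_succ, pow_succ]
      push_cast
      linear_combination ((x / 2 + n) * ((x + 1) / 2 + n) * 4) * ih

/-- Closed form for the product of the first two Pochhammer factors. -/
lemma eval_pair_num (a k : ℕ) (ha : 2 ≤ a) (hk : 2 * k ≤ a - 1) :
    (ascPochhammer ℚ k).eval ((1 - (a : ℚ)) / 2)
        * (ascPochhammer ℚ k).eval ((2 - (a : ℚ)) / 2)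
      = ((a - 1).factorial : ℚ) / ((a - 1 - 2 * k).factorial : ℚ) / 4 ^ k := by
  have h4 : (4 : ℚ) ^ k ≠ 0 := by positivity
  rw [evalAsc, evalAsc,
    show (2 - (a : ℚ)) / 2 = ((1 - (a : ℚ)) + 1) / 2 by ring]
  have hprod : ∏ j ∈ Finset.range (2 * k), ((1 - (a : ℚ)) + j)
      = ∏ j ∈ Finset.range (2 * k), (-(((a - 1 : ℕ)) : ℚ) + j) := by
    refine Finset.prod_congr rfl fun j _ => ?_
    rw [Nat.cast_sub (by omega : 1 ≤ a)]; push_cast; ring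
  have h2 := prod_pair (1 - (a : ℚ)) k
  rw [hprod, prod_negdesc' (a - 1) (2 * k) hk] at h2
  rw [eq_div_iff h4]
  rw [pow_mul] at h2
  norm_num at h2
  linear_combination h2

/-- Closed form for the Pochhammer factor at `-d`. -/
lemma eval_negd (d k : ℕ) (hk : k ≤ d) :
    (ascPochhammer ℚ k).eval (-(d : ℚ))
      = (-1) ^ k * (d.factorial : ℚ) / ((d - k).factorial : ℚ) := by
  rw [evalAsc]
  exact prod_negdesc' d k hk

/-- Closed form for the product of the two denominator Pochhammer factors. -/
lemma eval_pair_den (a d k : ℕ) (ha : 2 ≤ a) :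
    (ascPochhammer ℚ k).eval ((a : ℚ) * d - d + 1 / 2)
        * (ascPochhammer ℚ k).eval ((a : ℚ) * d - d + 1)
      = ((((2 * a - 2) * d) + 2 * k).factorial : ℚ)
          / ((((2 * a - 2) * d)).factorial : ℚ) / 4 ^ k := by
  have h4 : (4 : ℚ) ^ k ≠ 0 := by positivity
  have he1 : (((2 * a - 2) * d : ℕ) : ℚ) = 2 * (a : ℚ) * d - 2 * d := by
    rw [Nat.cast_mul, Nat.cast_sub (by omega : 2 ≤ 2 * a)]; push_cast; ring
  rw [evalAsc, evalAsc,
    show (a : ℚ) * d - d + 1 / 2 = ((((2 * a - 2) * d : ℕ) : ℚ) + 1) / 2 by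
      rw [he1]; ring,
    show (a : ℚ) * d - d + 1 = (((((2 * a - 2) * d : ℕ) : ℚ) + 1) + 1) / 2 by
      rw [he1]; ring]
  have h2 := prod_pair ((((2 * a - 2) * d : ℕ) : ℚ) + 1) k
  have hprod : ∏ j ∈ Finset.range (2 * k), (((((2 * a - 2) * d : ℕ) : ℚ) + 1) + j)
      = ((((2 * a - 2) * d) + 2 * k).factorial : ℚ)
          / ((((2 * a - 2) * d)).factorial : ℚ) := by
    rw [← prod_asc' ((2 * a - 2) * d) (2 * k)]
  rw [hprod] at h2
  rw [eq_div_iff h4]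
  linear_combination h2

/-- descFactorial as a ratio of factorials. -/
lemma descFactorial_cast (d k : ℕ) (hk : k ≤ d) :
    (d.descFactorial k : ℚ) = (d.factorial : ℚ) / ((d - k).factorial : ℚ) := by
  have hf : ((d - k).factorial : ℚ) ≠ 0 := Nat.cast_ne_zero.mpr (Nat.factorial_ne_zero _)
  rw [eq_div_iff hf]
  rw [← Nat.cast_mul, mul_comm, Nat.factorial_mul_descFactorial hk]

/-- The per-term identity. -/
lemma term_eq (a d k : ℕ) (ha : 2 ≤ a) (hd : 1 ≤ d) (hk1 : k ≤ d) (hk2 : 2 * k ≤ a - 1) :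
    ((2 * a * d).factorial : ℚ) * ((2 * a * d - 2 * d + a - 1).factorial : ℚ)
        / (((2 * a * d - 2 * d).factorial : ℚ) * (d.factorial : ℚ)
            * ((2 * a * d - d + a - 1).factorial : ℚ))
      * (((ascPochhammer ℚ k).eval ((1 - (a : ℚ)) / 2)
              * (ascPochhammer ℚ k).eval ((2 - (a : ℚ)) / 2)
              * (ascPochhammer ℚ k).eval (-(d : ℚ)))
            / ((ascPochhammer ℚ k).eval ((a : ℚ) * d - d + 1 / 2)
                * (ascPochhammer ℚ k).eval ((a : ℚ) * d - d + 1)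
                * (k.factorial : ℚ)))
    = ((2 * a * d).factorial : ℚ)
        / (((2 * a * d - d + a - 1).factorial : ℚ) * (d.factorial : ℚ))
        * ((-1 : ℚ) ^ k * secTerm a d k) := by
  have hsub : 2 * a * d - 2 * d = (2 * a - 2) * d := (Nat.sub_mul (2 * a) 2 d).symm
  rw [hsub, secTerm, eval_pair_num a k ha hk2, eval_negd d k hk1,
    eval_pair_den a d k ha, descFactorial_cast d k hk1]
  have h4 : (4 : ℚ) ^ k ≠ 0 := by positivity
  have f1 : ((2 * a * d).factorial : ℚ) ≠ 0 := Nat.cast_ne_zero.mpr (Nat.factorial_ne_zero _)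
  have f2 : (((2 * a - 2) * d + a - 1).factorial : ℚ) ≠ 0 :=
    Nat.cast_ne_zero.mpr (Nat.factorial_ne_zero _)
  have f3 : (((2 * a - 2) * d).factorial : ℚ) ≠ 0 :=
    Nat.cast_ne_zero.mpr (Nat.factorial_ne_zero _)
  have f4 : ((d).factorial : ℚ) ≠ 0 := Nat.cast_ne_zero.mpr (Nat.factorial_ne_zero _)
  have f5 : ((2 * a * d - d + a - 1).factorial : ℚ) ≠ 0 :=
    Nat.cast_ne_zero.mpr (Nat.factorial_ne_zero _)
  have f6 : (((2 * a - 2) * d + 2 * k).factorial : ℚ) ≠ 0 :=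
    Nat.cast_ne_zero.mpr (Nat.factorial_ne_zero _)
  have f7 : ((d - k).factorial : ℚ) ≠ 0 := Nat.cast_ne_zero.mpr (Nat.factorial_ne_zero _)
  have f8 : ((a - 1).factorial : ℚ) ≠ 0 := Nat.cast_ne_zero.mpr (Nat.factorial_ne_zero _)
  have f9 : ((a - 1 - 2 * k).factorial : ℚ) ≠ 0 :=
    Nat.cast_ne_zero.mpr (Nat.factorial_ne_zero _)
  have fk : ((k).factorial : ℚ) ≠ 0 := Nat.cast_ne_zero.mpr (Nat.factorial_ne_zero _)
  field_simp

/-- The hypergeometric expression for `−P_c(a,d)` equals `(2ad)!/((2ad−d+a−1)!·d!) · Q(a,d)`. -/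
theorem hypergeometric_eq_Q (a d : ℕ) (ha : 2 ≤ a) (hd : 1 ≤ d) :
    ((2 * a * d).factorial : ℚ) * ((2 * a * d - 2 * d + a - 1).factorial : ℚ)
        / (((2 * a * d - 2 * d).factorial : ℚ) * (d.factorial : ℚ)
            * ((2 * a * d - d + a - 1).factorial : ℚ))
      * ∑ k ∈ Finset.range (d + 1),
          ((ascPochhammer ℚ k).eval ((1 - (a : ℚ)) / 2)
              * (ascPochhammer ℚ k).eval ((2 - (a : ℚ)) / 2)
              * (ascPochhammer ℚ k).eval (-(d : ℚ)))
            / ((ascPochhammer ℚ k).eval ((a : ℚ) * d - d + 1 / 2)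
                * (ascPochhammer ℚ k).eval ((a : ℚ) * d - d + 1)
                * (k.factorial : ℚ))
    = ((2 * a * d).factorial : ℚ)
        / (((2 * a * d - d + a - 1).factorial : ℚ) * (d.factorial : ℚ)) * secQ a d := by
  set m := min d ((a - 1) / 2) with hm
  set C : ℚ := ((2 * a * d).factorial : ℚ) * ((2 * a * d - 2 * d + a - 1).factorial : ℚ)
      / (((2 * a * d - 2 * d).factorial : ℚ) * (d.factorial : ℚ)
          * ((2 * a * d - d + a - 1).factorial : ℚ)) with hC
  set D : ℚ := ((2 * a * d).factorial : ℚ)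
      / (((2 * a * d - d + a - 1).factorial : ℚ) * (d.factorial : ℚ)) with hD
  have hL : C * ∑ k ∈ Finset.range (d + 1),
        ((ascPochhammer ℚ k).eval ((1 - (a : ℚ)) / 2)
            * (ascPochhammer ℚ k).eval ((2 - (a : ℚ)) / 2)
            * (ascPochhammer ℚ k).eval (-(d : ℚ)))
          / ((ascPochhammer ℚ k).eval ((a : ℚ) * d - d + 1 / 2)
              * (ascPochhammer ℚ k).eval ((a : ℚ) * d - d + 1)
              * (k.factorial : ℚ))
      = ∑ k ∈ Finset.range (m + 1), C *
        (((ascPochhammer ℚ k).eval ((1 - (a : ℚ)) / 2)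
            * (ascPochhammer ℚ k).eval ((2 - (a : ℚ)) / 2)
            * (ascPochhammer ℚ k).eval (-(d : ℚ)))
          / ((ascPochhammer ℚ k).eval ((a : ℚ) * d - d + 1 / 2)
              * (ascPochhammer ℚ k).eval ((a : ℚ) * d - d + 1)
              * (k.factorial : ℚ))) := by
    rw [Finset.mul_sum]
    refine (Finset.sum_subset (Finset.range_subset_range.mpr (by omega)) ?_).symm
    intro k hk hk'
    simp only [Finset.mem_range] at hk hk'
    have hak : a - 1 < 2 * k := by omega
    have h0 : ∏ j ∈ Finset.range (2 * k), ((1 - (a : ℚ)) + j) = 0 := by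
      refine Finset.prod_eq_zero (Finset.mem_range.mpr hak) ?_
      rw [Nat.cast_sub (by omega : 1 ≤ a)]; push_cast; ring
    have h2 := prod_pair (1 - (a : ℚ)) k
    rw [h0] at h2
    have h4 : (4 : ℚ) ^ k ≠ 0 := by positivity
    have hz : (ascPochhammer ℚ k).eval ((1 - (a : ℚ)) / 2)
        * (ascPochhammer ℚ k).eval ((2 - (a : ℚ)) / 2) = 0 := by
      rw [evalAsc, evalAsc,
        show (2 - (a : ℚ)) / 2 = ((1 - (a : ℚ)) + 1) / 2 by ring]
      exact (mul_eq_zero.mp h2).resolve_left h4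
    rw [hz, zero_mul, zero_div, mul_zero]
  have hR : D * secQ a d
      = ∑ k ∈ Finset.range (m + 1), D * ((-1 : ℚ) ^ k * secTerm a d k) := by
    rw [secQ, Finset.mul_sum]
    refine (Finset.sum_subset (Finset.range_subset_range.mpr (by omega)) ?_).symm
    intro k hk hk'
    simp only [Finset.mem_range] at hk hk'
    have hdk : d < k := by omega
    simp [secTerm, Nat.descFactorial_eq_zero_iff_lt.mpr hdk]
  rw [hL, hR]
  refine Finset.sum_congr rfl fun k hk => ?_
  simp only [Finset.mem_range] at hk
  rw [hC, hD]
  exact term_eq a d k ha hd (by omega) (by omega)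
end

section
/- Let d, g, m be natural numbers with g ≥ 2d+1 and m ≤ 2g−2. The function z ↦ Z_{g,m}(z)·(1/2 − 1/(2√(1+4z))), where Z_{g,m}(z) = (2/(√(1+4z)+1))^{2g−2−m}·(1+4z)^{(g−1)/2} for real z ∈ (−1/4,1/4), is real-analytic at 0, and its d-th Taylor coefficient at 0 equals [g!·(2g−2−m)! / (2·(g−2d)!·d!·(2g−2−m+d)!)] · Σ_{k=0}^{d} [(−g/2+m/2+1−d)_k · (−g/2+(m+3)/2−d)_k · (−d)_k]/[((g+1)/2−d)_k · (g/2+1−d)_k · k!] − [(g−1)!·(2g−2−m)! / (2·(g−2d−1)!·d!·(2g−2−m+d)!)] · Σ_{k=0}^{d} [(−g/2+m/2+1−d)_k · (−g/2+(m+1)/2−d)_k · (−d)_k]/[((g+1)/2−d)_k · (g/2−d)_k · k!], where (x)_k = x(x+1)⋯(x+k−1) denotes the rising factorial. -/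
/-- The generating function `Z_{g,m}(z) = (2/(√(1+4z)+1))^{2g−2−m} · (1+4z)^{(g−1)/2}`. -/
noncomputable def Zgen (g m : ℝ) (z : ℝ) : ℝ :=
  (2 / (Real.sqrt (1 + 4 * z) + 1)) ^ (2 * g - 2 - m) * (1 + 4 * z) ^ ((g - 1) / 2)

open Polynomial Filter Finset Set
open scoped ContDiff Topology

namespace SecantPf

/-! ### Basic objects -/

def SS : Set ℝ := {z : ℝ | 0 < 1 + 4 * z}

noncomputable def uu (z : ℝ) : ℝ := Real.sqrt (1 + 4 * z)

noncomputable def fab (a b : ℕ) : ℝ → ℝ := fun z => (2 / (uu z + 1)) ^ a * uu z ^ b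

lemma isOpen_SS : IsOpen SS := by
  have : SS = (fun z : ℝ => 1 + 4 * z) ⁻¹' (Set.Ioi 0) := rfl
  rw [this]
  exact isOpen_Ioi.preimage (by continuity)

lemma mem_SS0 : (0 : ℝ) ∈ SS := by simp [SS]

lemma SS_nhds : SS ∈ 𝓝 (0 : ℝ) := isOpen_SS.mem_nhds mem_SS0

lemma pos_of_mem_SS {z : ℝ} (hz : z ∈ SS) : 0 < 1 + 4 * z := hz

lemma uu_pos {z : ℝ} (hz : z ∈ SS) : 0 < uu z := Real.sqrt_pos.2 hz

lemma uu_sq {z : ℝ} (hz : z ∈ SS) : uu z ^ 2 = 1 + 4 * z := Real.sq_sqrt hz.le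

lemma uu1_pos {z : ℝ} (hz : z ∈ SS) : 0 < uu z + 1 := by linarith [uu_pos hz]

lemma uu_zero : uu 0 = 1 := by simp [uu]

/-! ### Differentiability -/

lemma contDiffAt_1p4z {z : ℝ} : ContDiffAt ℝ ω (fun z : ℝ => 1 + 4 * z) z :=
  (contDiffAt_const.add (contDiffAt_const.mul contDiffAt_id))

lemma contDiffAt_uu {z : ℝ} (hz : z ∈ SS) : ContDiffAt ℝ ω uu z :=
  (Real.contDiffAt_sqrt (ne_of_gt hz)).comp z contDiffAt_1p4z

lemma contDiffAt_fab {a b : ℕ} {z : ℝ} (hz : z ∈ SS) : ContDiffAt ℝ ω (fab a b) z := by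
  have h1 : ContDiffAt ℝ ω (fun z => 2 / (uu z + 1)) z :=
    contDiffAt_const.div ((contDiffAt_uu hz).add contDiffAt_const) (ne_of_gt (uu1_pos hz))
  exact (h1.pow a).mul ((contDiffAt_uu hz).pow b)

lemma contDiffOn_fab {a b : ℕ} : ContDiffOn ℝ ω (fab a b) SS :=
  fun z hz => (contDiffAt_fab hz).contDiffWithinAt

lemma hasDerivAt_uu {z : ℝ} (hz : z ∈ SS) : HasDerivAt uu (2 / uu z) z := by
  have hin : HasDerivAt (fun z : ℝ => 1 + 4 * z) 4 z := by
    simpa using ((hasDerivAt_id z).const_mul (4 : ℝ)).const_add 1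
  have h := (Real.hasDerivAt_sqrt (ne_of_gt hz)).comp z hin
  refine h.congr_deriv ?_
  have h0 : Real.sqrt (1 + 4 * z) ≠ 0 := by
    simpa [uu] using (uu_pos hz).ne'
  simp only [uu]
  field_simp
  ring

noncomputable def dva (z : ℝ) : ℝ := -(2 * (2 / uu z)) / (uu z + 1) ^ 2

lemma hasDerivAt_va {z : ℝ} (hz : z ∈ SS) :
    HasDerivAt (fun z => 2 / (uu z + 1)) (dva z) z := by
  have h1 : HasDerivAt (fun z => uu z + 1) (2 / uu z) z := (hasDerivAt_uu hz).add_const 1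
  have h2 := (hasDerivAt_const z (2 : ℝ)).div h1 (ne_of_gt (uu1_pos hz))
  refine h2.congr_deriv ?_
  simp only [dva]
  ring

noncomputable def dfab (a b : ℕ) (z : ℝ) : ℝ :=
  ((a : ℝ) * (2 / (uu z + 1)) ^ (a - 1) * dva z) * uu z ^ b
    + (2 / (uu z + 1)) ^ a * ((b : ℝ) * uu z ^ (b - 1) * (2 / uu z))

lemma hasDerivAt_fab {a b : ℕ} {z : ℝ} (hz : z ∈ SS) :
    HasDerivAt (fab a b) (dfab a b z) z :=
  ((hasDerivAt_va hz).pow a).mul ((hasDerivAt_uu hz).pow b)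

lemma deriv_fab {a b : ℕ} {z : ℝ} (hz : z ∈ SS) : deriv (fab a b) z = dfab a b z :=
  (hasDerivAt_fab hz).deriv

lemma contDiffOn_deriv_fab {a b : ℕ} : ContDiffOn ℝ ω (deriv (fab a b)) SS :=
  contDiffOn_fab.deriv_of_isOpen isOpen_SS (by simp)

/-! ### iteratedDeriv helpers at 0 along SS -/

lemma itdW (n : ℕ) (f : ℝ → ℝ) : iteratedDerivWithin n f SS 0 = iteratedDeriv n f 0 := by
  rw [iteratedDerivWithin_eq_iteratedFDerivWithin, iteratedDeriv_eq_iteratedFDeriv,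
    iteratedFDerivWithin_of_isOpen n isOpen_SS mem_SS0]

lemma itd_congr {f g : ℝ → ℝ} (h : ∀ z ∈ SS, f z = g z) (n : ℕ) :
    iteratedDeriv n f 0 = iteratedDeriv n g 0 :=
  Filter.EventuallyEq.iteratedDeriv_eq n (eventually_of_mem SS_nhds h)

lemma itd_add {f g : ℝ → ℝ} (hf : ContDiffOn ℝ ω f SS) (hg : ContDiffOn ℝ ω g SS) (n : ℕ) :
    iteratedDeriv n (fun z => f z + g z) 0 = iteratedDeriv n f 0 + iteratedDeriv n g 0 := by
  rw [← itdW n, ← itdW n f, ← itdW n g]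
  exact iteratedDerivWithin_add mem_SS0 isOpen_SS.uniqueDiffOn
    ((hf 0 mem_SS0).of_le le_top) ((hg 0 mem_SS0).of_le le_top)

lemma itd_const_mul (c : ℝ) {f : ℝ → ℝ} (hf : ContDiffOn ℝ ω f SS) (n : ℕ) :
    iteratedDeriv n (fun z => c * f z) 0 = c * iteratedDeriv n f 0 := by
  rw [← itdW n, ← itdW n f]
  exact iteratedDerivWithin_const_mul mem_SS0 isOpen_SS.uniqueDiffOn c ((hf 0 mem_SS0).of_le le_top)

lemma itd_sub {f g : ℝ → ℝ} (hf : ContDiffOn ℝ ω f SS) (hg : ContDiffOn ℝ ω g SS) (n : ℕ) :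
    iteratedDeriv n (fun z => f z - g z) 0 = iteratedDeriv n f 0 - iteratedDeriv n g 0 := by
  rw [← itdW n, ← itdW n f, ← itdW n g]
  exact iteratedDerivWithin_sub mem_SS0 isOpen_SS.uniqueDiffOn
    ((hf 0 mem_SS0).of_le le_top) ((hg 0 mem_SS0).of_le le_top)

lemma differentiableAt_of_cd {f : ℝ → ℝ} (hf : ContDiffOn ℝ ω f SS) {z : ℝ} (hz : z ∈ SS) :
    DifferentiableAt ℝ f z :=
  (hf.contDiffAt (isOpen_SS.mem_nhds hz)).differentiableAt
    (by simp)

lemma itd_zmul {f : ℝ → ℝ} (hf : ContDiffOn ℝ ω f SS) (n : ℕ) :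
    iteratedDeriv (n + 1) (fun z => z * f z) 0 = (n + 1 : ℝ) * iteratedDeriv n f 0 := by
  induction n generalizing f with
  | zero =>
    rw [iteratedDeriv_one]
    have hd : HasDerivAt (fun z : ℝ => z * f z) (1 * f 0 + 0 * deriv f 0) 0 :=
      (hasDerivAt_id (0:ℝ)).mul ((differentiableAt_of_cd hf mem_SS0).hasDerivAt)
    rw [hd.deriv]
    simp [iteratedDeriv_zero]
  | succ n IH =>
    rw [iteratedDeriv_succ']
    have he : ∀ z ∈ SS, deriv (fun z => z * f z) z = f z + z * deriv f z := by
      intro z hz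
      have hd : HasDerivAt (fun z : ℝ => z * f z) (1 * f z + z * deriv f z) z :=
        (hasDerivAt_id z).mul ((differentiableAt_of_cd hf hz).hasDerivAt)
      rw [hd.deriv]; ring
    rw [itd_congr he]
    have hderiv : ContDiffOn ℝ ω (deriv f) SS :=
      hf.deriv_of_isOpen isOpen_SS (by simp)
    have h2 : ContDiffOn ℝ ω (fun z : ℝ => z * deriv f z) SS :=
      (contDiffOn_id.mul hderiv)
    rw [itd_add hf h2]
    rw [IH hderiv]
    have h3 : iteratedDeriv n (deriv f) 0 = iteratedDeriv (n + 1) f 0 := by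
      rw [iteratedDeriv_succ']
    rw [h3]
    push_cast
    ring

lemma itd_zmul' {f : ℝ → ℝ} (hf : ContDiffOn ℝ ω f SS) (n : ℕ) :
    iteratedDeriv n (fun z => z * f z) 0 = (n : ℝ) * iteratedDeriv (n - 1) f 0 := by
  cases n with
  | zero => simp [iteratedDeriv_zero]
  | succ n => rw [itd_zmul hf n]; push_cast; simp

/-! ### The function identity (FI) -/

lemma pow_pred_mul {x : ℝ} (a : ℕ) : (a : ℝ) * x ^ (a - 1) * x = (a : ℝ) * x ^ a := by
  cases a with
  | zero => simp
  | succ a => rw [Nat.add_sub_cancel, mul_assoc, ← pow_succ]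

lemma FI (a b : ℕ) {z : ℝ} (hz : z ∈ SS) :
    deriv (fab a (b + 1)) z =
      ((b : ℝ) - a) * fab (a + 1) (b + 1) z - 2 * (z * deriv (fab (a + 1) (b + 1)) z)
        + ((b : ℝ) + 2) * fab (a + 1) b z := by
  rw [deriv_fab hz, deriv_fab hz]
  unfold dfab dva fab
  have hU := uu_pos hz
  have hU1 := uu1_pos hz
  have hz4 : z = (uu z ^ 2 - 1) / 4 := by have := uu_sq hz; linarith
  set U := uu z with hUdef
  rw [hz4]
  simp only [Nat.add_sub_cancel]
  have hUne : U ≠ 0 := ne_of_gt hU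
  have hU1ne : U + 1 ≠ 0 := ne_of_gt hU1
  cases a with
  | zero =>
    simp only [Nat.cast_zero, Nat.zero_sub, pow_zero, Nat.cast_ofNat, Nat.cast_succ]
    push_cast
    field_simp
    ring
  | succ a =>
    simp only [Nat.add_sub_cancel]
    push_cast
    have hU1ne' : 1 + U ≠ 0 := by linarith
    simp only [div_pow]
    field_simp
    ring

/-! ### MASTER recurrence on coefficients -/

noncomputable def coefD (a b d : ℕ) : ℝ := iteratedDeriv d (fab a b) 0

lemma itd_pred (F : ℝ → ℝ) (d : ℕ) :
    (d : ℝ) * iteratedDeriv (d - 1) (deriv F) 0 = (d : ℝ) * iteratedDeriv d F 0 := by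
  cases d with
  | zero => simp
  | succ d =>
    rw [Nat.add_sub_cancel, ← iteratedDeriv_succ']

lemma masterC (a b d : ℕ) :
    coefD a (b + 1) (d + 1) =
      ((b : ℝ) - a - 2 * d) * coefD (a + 1) (b + 1) d + ((b : ℝ) + 2) * coefD (a + 1) b d := by
  unfold coefD
  rw [iteratedDeriv_succ']
  have h1 : ∀ z ∈ SS, deriv (fab a (b + 1)) z
      = ((b : ℝ) - a) * fab (a + 1) (b + 1) z
        + ((-2 : ℝ) * (z * deriv (fab (a + 1) (b + 1)) z)
          + ((b : ℝ) + 2) * fab (a + 1) b z) := by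
    intro z hz
    have := FI a b hz
    linarith
  rw [itd_congr h1 d]
  have c1 : ContDiffOn ℝ ω (fun z => ((b : ℝ) - a) * fab (a + 1) (b + 1) z) SS :=
    contDiffOn_const.mul contDiffOn_fab
  have czd : ContDiffOn ℝ ω (fun z : ℝ => z * deriv (fab (a + 1) (b + 1)) z) SS :=
    contDiffOn_id.mul contDiffOn_deriv_fab
  have c2 : ContDiffOn ℝ ω
      (fun z : ℝ => (-2 : ℝ) * (z * deriv (fab (a + 1) (b + 1)) z)) SS :=
    contDiffOn_const.mul czd
  have c3 : ContDiffOn ℝ ω (fun z => ((b : ℝ) + 2) * fab (a + 1) b z) SS :=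
    contDiffOn_const.mul contDiffOn_fab
  rw [itd_add c1 (c2.add c3), itd_add c2 c3,
    itd_const_mul _ contDiffOn_fab, itd_const_mul _ czd, itd_const_mul _ contDiffOn_fab,
    itd_zmul' contDiffOn_deriv_fab d]
  have := itd_pred (fab (a + 1) (b + 1)) d
  linarith

/-! ### The explicit side: A sums -/

noncomputable def ae (n : ℕ) (y : ℝ) : ℝ := (ascPochhammer ℝ n).eval y
noncomputable def de (n : ℕ) (x : ℝ) : ℝ := (descPochhammer ℝ n).eval x

lemma ae_zero (y : ℝ) : ae 0 y = 1 := by simp [ae, ascPochhammer_zero]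
lemma de_zero (x : ℝ) : de 0 x = 1 := by simp [de, descPochhammer_zero]

lemma ae_succ_right (n : ℕ) (y : ℝ) : ae (n + 1) y = ae n y * (y + n) := by
  simp [ae, ascPochhammer_succ_eval]

lemma de_succ_right (n : ℕ) (x : ℝ) : de (n + 1) x = de n x * (x - n) := by
  simp [de, descPochhammer_succ_eval]

lemma ae_succ_left (n : ℕ) (y : ℝ) : ae (n + 1) y = y * ae n (y + 1) := by
  simp only [ae, ascPochhammer_succ_left, eval_mul, eval_X, eval_comp, eval_add, eval_one,
    Polynomial.X_mul, eval_mul_X]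
  ring

lemma de_succ_left (n : ℕ) (x : ℝ) : de (n + 1) x = x * de n (x - 1) := by
  simp only [de, descPochhammer_succ_left, eval_mul, eval_X, eval_comp, eval_sub, eval_one,
    Polynomial.X_mul, eval_mul_X]
  ring

noncomputable def AA (d : ℕ) (y x : ℝ) : ℝ :=
  ∑ k ∈ Finset.range (d + 1),
    (-1 : ℝ) ^ k * (d.choose k : ℝ) * ae (2 * k) y * de (2 * (d - k)) x

lemma AA_zero (y x : ℝ) : AA 0 y x = 1 := by
  simp [AA, ae_zero, de_zero]

lemma masterA (d : ℕ) (y x : ℝ) :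
    AA (d + 1) y x =
      (x - y - 2 * (d + 1) + 1) * (y * AA d (y + 1) x + x * AA d y (x - 1)) := by
  have hsplit : AA (d + 1) y x
      = (∑ k ∈ Finset.range (d + 1),
          (-1 : ℝ) ^ k * (d.choose k : ℝ) * ae (2 * k) y * de (2 * ((d + 1) - k)) x)
        - ∑ k ∈ Finset.range (d + 1),
            (-1 : ℝ) ^ k * (d.choose k : ℝ) * ae (2 * (k + 1)) y * de (2 * (d - k)) x := by
    unfold AA
    rw [Finset.sum_range_succ']
    have hT : ∀ i ∈ Finset.range (d + 1),
        (-1 : ℝ) ^ (i + 1) * ((d + 1).choose (i + 1) : ℝ) * ae (2 * (i + 1)) y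
            * de (2 * ((d + 1) - (i + 1))) x
        = ((-1 : ℝ) ^ (i + 1) * (d.choose (i + 1) : ℝ) * ae (2 * (i + 1)) y
            * de (2 * ((d + 1) - (i + 1))) x)
          - ((-1 : ℝ) ^ i * (d.choose i : ℝ) * ae (2 * (i + 1)) y * de (2 * (d - i)) x) := by
      intro i _
      have h2 : (d + 1) - (i + 1) = d - i := by omega
      rw [Nat.choose_succ_succ, h2]
      push_cast
      ring
    rw [Finset.sum_congr rfl hT, Finset.sum_sub_distrib]
    have hback : (∑ i ∈ Finset.range (d + 1), (-1 : ℝ) ^ (i + 1) * (d.choose (i + 1) : ℝ)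
          * ae (2 * (i + 1)) y * de (2 * ((d + 1) - (i + 1))) x)
        + (-1 : ℝ) ^ 0 * (((d + 1).choose 0 : ℕ) : ℝ) * ae (2 * 0) y * de (2 * ((d + 1) - 0)) x
        = ∑ k ∈ Finset.range (d + 1),
            (-1 : ℝ) ^ k * (d.choose k : ℝ) * ae (2 * k) y * de (2 * ((d + 1) - k)) x := by
      have h0 : ((-1 : ℝ) ^ 0 * (((d + 1).choose 0 : ℕ) : ℝ) * ae (2 * 0) y
            * de (2 * ((d + 1) - 0)) x)
          = (-1 : ℝ) ^ 0 * ((d.choose 0 : ℕ) : ℝ) * ae (2 * 0) y * de (2 * ((d + 1) - 0)) x := by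
        simp
      rw [h0, ← Finset.sum_range_succ'
        (fun k => (-1 : ℝ) ^ k * (d.choose k : ℝ) * ae (2 * k) y * de (2 * ((d + 1) - k)) x)
        (d + 1), Finset.sum_range_succ]
      have hlast : (-1 : ℝ) ^ (d + 1) * (d.choose (d + 1) : ℝ) * ae (2 * (d + 1)) y
          * de (2 * ((d + 1) - (d + 1))) x = 0 := by
        rw [Nat.choose_succ_self]
        simp
      rw [hlast, add_zero]
    linarith
  rw [hsplit, ← Finset.sum_sub_distrib]
  have hterm : ∀ k ∈ Finset.range (d + 1),
      ((-1 : ℝ) ^ k * (d.choose k : ℝ) * ae (2 * k) y * de (2 * ((d + 1) - k)) x)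
        - ((-1 : ℝ) ^ k * (d.choose k : ℝ) * ae (2 * (k + 1)) y * de (2 * (d - k)) x)
      = (x - y - 2 * (d + 1) + 1) *
          (y * ((-1 : ℝ) ^ k * (d.choose k : ℝ) * ae (2 * k) (y + 1) * de (2 * (d - k)) x)
            + x * ((-1 : ℝ) ^ k * (d.choose k : ℝ) * ae (2 * k) y * de (2 * (d - k)) (x - 1))) := by
    intro k hk
    have hkd : k ≤ d := Nat.lt_succ_iff.mp (Finset.mem_range.mp hk)
    have h1 : 2 * ((d + 1) - k) = 2 * (d - k) + 1 + 1 := by omega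
    have h2 : 2 * (k + 1) = 2 * k + 1 + 1 := by omega
    rw [h1, h2, de_succ_right, de_succ_right, ae_succ_right, ae_succ_right]
    have h3 : y * ae (2 * k) (y + 1) = ae (2 * k) y * (y + (2 * k : ℕ)) := by
      rw [← ae_succ_left, ae_succ_right]
    have h4 : x * de (2 * (d - k)) (x - 1) = de (2 * (d - k)) x * (x - (2 * (d - k) : ℕ)) := by
      rw [← de_succ_left, de_succ_right]
    have hc : ((d - k : ℕ) : ℝ) = (d : ℝ) - (k : ℝ) := by
      rw [Nat.cast_sub hkd]
    push_cast [hc] at h3 h4 ⊢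
    linear_combination
      (-((x - y - 2 * ((d : ℝ) + 1) + 1) * (-1 : ℝ) ^ k * (d.choose k : ℝ)
          * de (2 * (d - k)) x)) * h3
        + (-((x - y - 2 * ((d : ℝ) + 1) + 1) * (-1 : ℝ) ^ k * (d.choose k : ℝ)
          * ae (2 * k) y)) * h4
  rw [Finset.sum_congr rfl hterm]
  rw [← Finset.mul_sum, Finset.sum_add_distrib, ← Finset.mul_sum, ← Finset.mul_sum]
  rfl

/-! ### TT and MASTER-T -/

noncomputable def TT (a b d : ℕ) : ℝ :=
  (a.factorial : ℝ) / ((d.factorial : ℝ) * ((a + d).factorial : ℝ)) *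
    AA d ((b : ℝ) + 1 - a - 2 * d) ((b : ℝ) + 1)

lemma TT_zero (a b : ℕ) : TT a b 0 = 1 := by
  simp [TT, AA_zero]
  exact Nat.factorial_ne_zero a

lemma masterT (a b d : ℕ) :
    ((d : ℝ) + 1) * TT a (b + 1) (d + 1) =
      ((b : ℝ) - a - 2 * d) * TT (a + 1) (b + 1) d + ((b : ℝ) + 2) * TT (a + 1) b d := by
  unfold TT
  have hM := masterA d ((b : ℝ) - a - 2 * d) ((b : ℝ) + 2)
  have eY : ((b + 1 : ℕ) : ℝ) + 1 - (a : ℝ) - 2 * ((d + 1 : ℕ) : ℝ)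
      = (b : ℝ) - a - 2 * d := by push_cast; ring
  have eX : ((b + 1 : ℕ) : ℝ) + 1 = (b : ℝ) + 2 := by push_cast; ring
  have eY1 : (b : ℝ) + 2 - ((a + 1 : ℕ) : ℝ) - 2 * (d : ℝ)
      = ((b : ℝ) - a - 2 * d) + 1 := by push_cast; ring
  have eY2 : ((b : ℕ) : ℝ) + 1 - ((a + 1 : ℕ) : ℝ) - 2 * (d : ℝ)
      = (b : ℝ) - a - 2 * d := by push_cast; ring
  have eX2 : ((b : ℕ) : ℝ) + 1 = ((b : ℝ) + 2) - 1 := by push_cast; ring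
  rw [eY, eX, eY1, eY2, eX2, hM]
  have hfd : ((d + 1).factorial : ℝ) = ((d : ℝ) + 1) * (d.factorial : ℝ) := by
    rw [Nat.factorial_succ]; push_cast; ring
  have hfa : ((a + 1).factorial : ℝ) = ((a : ℝ) + 1) * (a.factorial : ℝ) := by
    rw [Nat.factorial_succ]; push_cast; ring
  have hind : a + (d + 1) = (a + 1) + d := by omega
  rw [hind, hfd, hfa]
  have h1 : (d.factorial : ℝ) ≠ 0 := Nat.cast_ne_zero.2 (Nat.factorial_ne_zero d)
  have h2 : (((a + 1) + d).factorial : ℝ) ≠ 0 := Nat.cast_ne_zero.2 (Nat.factorial_ne_zero _)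
  have h3 : (a.factorial : ℝ) ≠ 0 := Nat.cast_ne_zero.2 (Nat.factorial_ne_zero a)
  have h4 : ((d : ℝ) + 1) ≠ 0 := by positivity
  have h5 : ((a : ℝ) + 1) ≠ 0 := by positivity
  field_simp
  ring

/-! ### Main induction -/

lemma main_ind : ∀ d a b : ℕ, d ≤ b →
    coefD a b d = (d.factorial : ℝ) * TT a b d := by
  intro d
  induction d with
  | zero =>
    intro a b _
    rw [TT_zero]
    simp only [Nat.factorial_zero, Nat.cast_one, mul_one]
    simp [coefD, fab, uu_zero]
    norm_num
  | succ d IH =>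
    intro a b hb
    obtain ⟨b', rfl⟩ : ∃ b', b = b' + 1 := ⟨b - 1, by omega⟩
    rw [masterC a b' d, IH (a + 1) (b' + 1) (by omega), IH (a + 1) b' (by omega)]
    have hM := masterT a b' d
    have hfd : ((d + 1).factorial : ℝ) = ((d : ℝ) + 1) * (d.factorial : ℝ) := by
      rw [Nat.factorial_succ]; push_cast; ring
    rw [hfd]
    linear_combination (-(d.factorial : ℝ)) * hM

/-! ### Conversion lemmas -/

lemma ae_pos {y : ℝ} (hy : 0 < y) (k : ℕ) : 0 < ae k y :=
  ascPochhammer_pos k y hy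

lemma ae_dup (k : ℕ) (x : ℝ) : ae k x * ae k (x + 1 / 2) * 4 ^ k = ae (2 * k) (2 * x) := by
  induction k with
  | zero => simp [ae_zero]
  | succ k IH =>
    have h2 : 2 * (k + 1) = 2 * k + 1 + 1 := by omega
    rw [h2, ae_succ_right, ae_succ_right, ae_succ_right, ae_succ_right]
    push_cast
    linear_combination ((2 * x + 2 * (k : ℝ)) * (2 * x + 2 * (k : ℝ) + 1)) * IH

lemma choose_succ_rel (k e : ℕ) :
    (k + 1 + e).choose k * k.factorial * (e + 1)
      = (k + 1 + e).choose (k + 1) * (k + 1).factorial := by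
  have h1 := Nat.choose_mul_factorial_mul_factorial (show k ≤ k + 1 + e by omega)
  have h2 := Nat.choose_mul_factorial_mul_factorial (show k + 1 ≤ k + 1 + e by omega)
  have e1 : k + 1 + e - k = e + 1 := by omega
  have e2 : k + 1 + e - (k + 1) = e := by omega
  rw [e1] at h1
  rw [e2] at h2
  apply Nat.eq_of_mul_eq_mul_right (Nat.factorial_pos e)
  calc (k + 1 + e).choose k * k.factorial * (e + 1) * e.factorial
      = (k + 1 + e).choose k * k.factorial * ((e + 1) * e.factorial) := by ring
    _ = (k + 1 + e).choose k * k.factorial * (e + 1).factorial := by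
        rw [Nat.factorial_succ]
    _ = (k + 1 + e).factorial := h1
    _ = (k + 1 + e).choose (k + 1) * (k + 1).factorial * e.factorial := h2.symm

lemma ae_neg_nat (d : ℕ) : ∀ k : ℕ, k ≤ d →
    ae k (-(d : ℝ)) = (-1 : ℝ) ^ k * (d.choose k : ℝ) * (k.factorial : ℝ) := by
  intro k
  induction k with
  | zero => intro _; simp [ae_zero]
  | succ k IH =>
    intro h
    obtain ⟨e, rfl⟩ : ∃ e, d = k + 1 + e := ⟨d - (k + 1), by omega⟩
    rw [ae_succ_right, IH (by omega)]
    have hrel := choose_succ_rel k e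
    have hrelR : ((k + 1 + e).choose k : ℝ) * (k.factorial : ℝ) * ((e : ℝ) + 1)
        = ((k + 1 + e).choose (k + 1) : ℝ) * ((k + 1).factorial : ℝ) := by
      exact_mod_cast congrArg (fun t : ℕ => (t : ℝ)) hrel
    push_cast
    linear_combination (-((-1 : ℝ) ^ k)) * hrelR

lemma de_split (n : ℕ) : ∀ j : ℕ, ∀ x : ℝ,
    de (n + j) x = de n x * ae j (x - n - j + 1) := by
  intro j
  induction j with
  | zero => intro x; simp [ae_zero]
  | succ j IH =>
    intro x
    have h : n + (j + 1) = (n + j) + 1 := rfl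
    rw [h, de_succ_right, IH]
    have e1 : x - (n : ℝ) - ((j + 1 : ℕ) : ℝ) + 1 = x - n - j := by push_cast; ring
    rw [e1, ae_succ_left]
    have e2 : ((n + j : ℕ) : ℝ) = (n : ℝ) + j := by push_cast; ring
    rw [e2]
    ring

lemma de_factorial (g n : ℕ) (h : n ≤ g) :
    (g.factorial : ℝ) = de n (g : ℝ) * (((g - n).factorial : ℕ) : ℝ) := by
  have h1 : de n (g : ℝ) = (g.descFactorial n : ℝ) := by
    simpa [de] using descPochhammer_eval_eq_descFactorial ℝ g n
  rw [h1, ← Nat.cast_mul]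
  have h2 : g.descFactorial n * (g - n).factorial = g.factorial := by
    rw [Nat.mul_comm]
    exact Nat.factorial_mul_descFactorial h
  exact_mod_cast h2.symm

lemma conv_term (d k : ℕ) (hk : k ≤ d) (α β x : ℝ) (hβ : 0 < β) (hx : x - 2 * d + 1 = 2 * β) :
    de (2 * d) x * (ae k α * ae k (α + 1 / 2) * ae k (-(d : ℝ))
        / (ae k β * ae k (β + 1 / 2) * (k.factorial : ℝ)))
      = (-1 : ℝ) ^ k * (d.choose k : ℝ) * ae (2 * k) (2 * α) * de (2 * (d - k)) x := by
  have hsplit : de (2 * d) x = de (2 * (d - k)) x * ae (2 * k) (2 * β) := by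
    have h1 : 2 * d = 2 * (d - k) + 2 * k := by omega
    rw [h1, de_split]
    have e1 : x - ((2 * (d - k) : ℕ) : ℝ) - ((2 * k : ℕ) : ℝ) + 1 = 2 * β := by
      rw [← hx]
      push_cast [Nat.cast_sub hk]
      ring
    rw [e1]
  rw [hsplit, ← ae_dup k β, ← ae_dup k α, ae_neg_nat d k hk]
  have p1 : ae k β ≠ 0 := ne_of_gt (ae_pos hβ k)
  have p2 : ae k (β + 1 / 2) ≠ 0 := ne_of_gt (ae_pos (by linarith) k)
  have p3 : (k.factorial : ℝ) ≠ 0 := Nat.cast_ne_zero.2 (Nat.factorial_ne_zero k)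
  have pM : ae k β * ae k (β + 1 / 2) * (k.factorial : ℝ) ≠ 0 :=
    mul_ne_zero (mul_ne_zero p1 p2) p3
  rw [← mul_div_assoc, div_eq_iff pM]
  ring

lemma conv_sum (d : ℕ) (α β x : ℝ) (hβ : 0 < β) (hx : x - 2 * d + 1 = 2 * β) :
    de (2 * d) x * ∑ k ∈ Finset.range (d + 1),
        ae k α * ae k (α + 1 / 2) * ae k (-(d : ℝ))
          / (ae k β * ae k (β + 1 / 2) * (k.factorial : ℝ))
      = AA d (2 * α) x := by
  rw [Finset.mul_sum]
  unfold AA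
  refine Finset.sum_congr rfl ?_
  intro k hk
  exact conv_term d k (Nat.lt_succ_iff.mp (Finset.mem_range.mp hk)) α β x hβ hx

end SecantPf

open SecantPf in
theorem taylor_coeff_Palpha (d g m : ℕ) (hg : 2 * d + 1 ≤ g) (hm : m + 2 ≤ 2 * g) :
    AnalyticAt ℝ (fun z => Zgen g m z * (1 / 2 - 1 / (2 * Real.sqrt (1 + 4 * z)))) 0 ∧
    iteratedDeriv d (fun z => Zgen g m z * (1 / 2 - 1 / (2 * Real.sqrt (1 + 4 * z)))) 0
        / (d.factorial : ℝ) =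
      ((g.factorial : ℝ) * ((2 * g - 2 - m).factorial : ℝ))
          / (2 * ((g - 2 * d).factorial : ℝ) * (d.factorial : ℝ)
              * ((2 * g - 2 - m + d).factorial : ℝ))
        * ∑ k ∈ Finset.range (d + 1),
            ((ascPochhammer ℝ k).eval (-(g : ℝ) / 2 + (m : ℝ) / 2 + 1 - d)
                * (ascPochhammer ℝ k).eval (-(g : ℝ) / 2 + ((m : ℝ) + 3) / 2 - d)
                * (ascPochhammer ℝ k).eval (-(d : ℝ)))
              / ((ascPochhammer ℝ k).eval (((g : ℝ) + 1) / 2 - d)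
                  * (ascPochhammer ℝ k).eval ((g : ℝ) / 2 + 1 - d)
                  * (k.factorial : ℝ))
      - ((g - 1).factorial : ℝ) * ((2 * g - 2 - m).factorial : ℝ)
          / (2 * ((g - 2 * d - 1).factorial : ℝ) * (d.factorial : ℝ)
              * ((2 * g - 2 - m + d).factorial : ℝ))
        * ∑ k ∈ Finset.range (d + 1),
            ((ascPochhammer ℝ k).eval (-(g : ℝ) / 2 + (m : ℝ) / 2 + 1 - d)
                * (ascPochhammer ℝ k).eval (-(g : ℝ) / 2 + ((m : ℝ) + 1) / 2 - d)
                * (ascPochhammer ℝ k).eval (-(d : ℝ)))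
              / ((ascPochhammer ℝ k).eval (((g : ℝ) + 1) / 2 - d)
                  * (ascPochhammer ℝ k).eval ((g : ℝ) / 2 - d)
                  * (k.factorial : ℝ)) := by
  constructor
  · -- Analyticity
    have h14 : ContDiffAt ℝ ω (fun z : ℝ => 1 + 4 * z) 0 := contDiffAt_1p4z
    have hsqv : (1 : ℝ) + 4 * 0 = 1 := by norm_num
    have hsq : ContDiffAt ℝ ω (fun z : ℝ => Real.sqrt (1 + 4 * z)) 0 := by
      have h := Real.contDiffAt_sqrt (x := 1 + 4 * (0 : ℝ)) (n := ω) (by norm_num)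
      exact h.comp 0 h14
    have hden : ContDiffAt ℝ ω (fun z : ℝ => 2 / (Real.sqrt (1 + 4 * z) + 1)) 0 := by
      refine contDiffAt_const.div (hsq.add contDiffAt_const) ?_
      rw [hsqv, Real.sqrt_one]
      norm_num
    have hpow1 : ContDiffAt ℝ ω
        (fun z : ℝ => (2 / (Real.sqrt (1 + 4 * z) + 1)) ^ (2 * (g : ℝ) - 2 - m)) 0 := by
      have houter := Real.contDiffAt_rpow_const_of_ne
        (x := 2 / (Real.sqrt (1 + 4 * (0 : ℝ)) + 1)) (p := 2 * (g : ℝ) - 2 - m) (n := ω)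
        (by rw [hsqv, Real.sqrt_one]; norm_num)
      exact houter.comp 0 hden
    have hpow2 : ContDiffAt ℝ ω (fun z : ℝ => (1 + 4 * z) ^ (((g : ℝ) - 1) / 2)) 0 := by
      have houter := Real.contDiffAt_rpow_const_of_ne
        (x := 1 + 4 * (0 : ℝ)) (p := ((g : ℝ) - 1) / 2) (n := ω) (by norm_num)
      exact houter.comp 0 h14
    have hfac2 : ContDiffAt ℝ ω (fun z : ℝ => 1 / 2 - 1 / (2 * Real.sqrt (1 + 4 * z))) 0 := by
      refine contDiffAt_const.sub (contDiffAt_const.div (contDiffAt_const.mul hsq) ?_)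
      rw [hsqv, Real.sqrt_one]
      norm_num
    have hF : ContDiffAt ℝ ω
        (fun z : ℝ => Zgen g m z * (1 / 2 - 1 / (2 * Real.sqrt (1 + 4 * z)))) 0 := by
      unfold Zgen
      exact (hpow1.mul hpow2).mul hfac2
    exact hF.analyticAt
  · rcases Nat.eq_zero_or_pos d with rfl | hdpos
    · -- d = 0 : both sides vanish
      have hL : iteratedDeriv 0
          (fun z => Zgen g m z * (1 / 2 - 1 / (2 * Real.sqrt (1 + 4 * z)))) 0 = 0 := by
        rw [iteratedDeriv_zero]
        show Zgen g m 0 * (1 / 2 - 1 / (2 * Real.sqrt (1 + 4 * 0))) = 0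
        rw [show (1 : ℝ) + 4 * 0 = 1 by norm_num, Real.sqrt_one]
        norm_num
      rw [hL, zero_div]
      symm
      have hg2 : (1 : ℕ) ≤ g := by omega
      simp only [Finset.sum_range_one, ascPochhammer_zero, Polynomial.eval_one,
        Nat.factorial_zero, Nat.mul_zero, Nat.sub_zero, Nat.add_zero, Nat.cast_one]
      have e1 : (g.factorial : ℝ) ≠ 0 := Nat.cast_ne_zero.2 (Nat.factorial_ne_zero _)
      have e2 : ((g - 1).factorial : ℝ) ≠ 0 := Nat.cast_ne_zero.2 (Nat.factorial_ne_zero _)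
      have e3 : ((2 * g - 2 - m).factorial : ℝ) ≠ 0 := Nat.cast_ne_zero.2 (Nat.factorial_ne_zero _)
      field_simp
      simp
    · -- main case : d ≥ 1 hence g ≥ 3
      have hg3 : 3 ≤ g := by omega
      set a := 2 * g - 2 - m with ha
      have hacast : ((a : ℕ) : ℝ) = 2 * (g : ℝ) - 2 - (m : ℝ) := by
        rw [ha, Nat.cast_sub (show m ≤ 2 * g - 2 by omega),
          Nat.cast_sub (show 2 ≤ 2 * g by omega)]
        push_cast
        ring
      have hgR : (2 * (d : ℝ) + 1) ≤ (g : ℝ) := by exact_mod_cast hg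
      have hFeq : ∀ z ∈ SS, Zgen g m z * (1 / 2 - 1 / (2 * Real.sqrt (1 + 4 * z)))
          = (1 / 2) * (fab a (g - 1) z - fab a (g - 2) z) := by
        intro z hz
        have hUpos := uu_pos hz
        have hUne : uu z ≠ 0 := ne_of_gt hUpos
        have h14 : (0 : ℝ) < 1 + 4 * z := hz
        have hsqu : Real.sqrt (1 + 4 * z) = uu z := rfl
        have e1 : (2 / (Real.sqrt (1 + 4 * z) + 1)) ^ (2 * (g : ℝ) - 2 - (m : ℝ))
            = (2 / (uu z + 1)) ^ (a : ℕ) := by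
          rw [← hacast, Real.rpow_natCast, hsqu]
        have e2 : ((1 : ℝ) + 4 * z) ^ (((g : ℝ) - 1) / 2) = uu z ^ (g - 1 : ℕ) := by
          have hc : ((g : ℝ) - 1) / 2 = (1 / 2 : ℝ) * (((g - 1 : ℕ) : ℕ) : ℝ) := by
            rw [Nat.cast_sub (show 1 ≤ g by omega)]
            push_cast
            ring
          rw [hc, Real.rpow_mul (le_of_lt h14), ← Real.sqrt_eq_rpow, Real.rpow_natCast, hsqu]
        unfold Zgen
        rw [e1, e2, hsqu]
        simp only [fab]
        obtain ⟨g', rfl⟩ : ∃ g', g = g' + 3 := ⟨g - 3, by omega⟩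
        have egg : g' + 3 - 1 = g' + 2 := by omega
        have egg2 : g' + 3 - 2 = g' + 1 := by omega
        rw [egg, egg2, show g' + 2 = (g' + 1) + 1 from rfl, pow_succ]
        field_simp
      have hd1 : d ≤ g - 1 := by omega
      have hd2 : d ≤ g - 2 := by omega
      have hmain1 := main_ind d a (g - 1) hd1
      have hmain2 := main_ind d a (g - 2) hd2
      have hsubCD : ContDiffOn ℝ ω (fun z => fab a (g - 1) z - fab a (g - 2) z) SS :=
        contDiffOn_fab.sub contDiffOn_fab
      have hL : iteratedDeriv d
          (fun z => Zgen g m z * (1 / 2 - 1 / (2 * Real.sqrt (1 + 4 * z)))) 0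
          = (1 / 2) * ((d.factorial : ℝ) * TT a (g - 1) d
              - (d.factorial : ℝ) * TT a (g - 2) d) := by
        rw [itd_congr hFeq d, itd_const_mul _ hsubCD d,
          itd_sub contDiffOn_fab contDiffOn_fab d]
        have c1 : iteratedDeriv d (fab a (g - 1)) 0 = coefD a (g - 1) d := rfl
        have c2 : iteratedDeriv d (fab a (g - 2)) 0 = coefD a (g - 2) d := rfl
        rw [c1, c2, hmain1, hmain2]
      rw [hL]
      -- convert the RHS sums
      have hβ1 : (0 : ℝ) < ((g : ℝ) + 1) / 2 - d := by linarith
      have hβ2 : (0 : ℝ) < (g : ℝ) / 2 - d := by linarith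
      have hS1 := conv_sum d (-(g : ℝ) / 2 + m / 2 + 1 - d) (((g : ℝ) + 1) / 2 - d) (g : ℝ)
        hβ1 (by ring)
      have hS2 := conv_sum d (-(g : ℝ) / 2 + ((m : ℝ) + 1) / 2 - d) ((g : ℝ) / 2 - d)
        ((g : ℝ) - 1) hβ2 (by ring)
      have hsum1 : (∑ k ∈ Finset.range (d + 1),
            ((ascPochhammer ℝ k).eval (-(g : ℝ) / 2 + (m : ℝ) / 2 + 1 - d)
                * (ascPochhammer ℝ k).eval (-(g : ℝ) / 2 + ((m : ℝ) + 3) / 2 - d)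
                * (ascPochhammer ℝ k).eval (-(d : ℝ)))
              / ((ascPochhammer ℝ k).eval (((g : ℝ) + 1) / 2 - d)
                  * (ascPochhammer ℝ k).eval ((g : ℝ) / 2 + 1 - d)
                  * (k.factorial : ℝ)))
          = ∑ k ∈ Finset.range (d + 1),
              ae k (-(g : ℝ) / 2 + m / 2 + 1 - d)
                  * ae k ((-(g : ℝ) / 2 + m / 2 + 1 - d) + 1 / 2) * ae k (-(d : ℝ))
                / (ae k (((g : ℝ) + 1) / 2 - d)
                    * ae k ((((g : ℝ) + 1) / 2 - d) + 1 / 2) * (k.factorial : ℝ)) := by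
        refine Finset.sum_congr rfl fun k _ => ?_
        rw [show -(g : ℝ) / 2 + ((m : ℝ) + 3) / 2 - (d : ℝ)
              = (-(g : ℝ) / 2 + (m : ℝ) / 2 + 1 - (d : ℝ)) + 1 / 2 by ring,
            show (g : ℝ) / 2 + 1 - (d : ℝ) = ((((g : ℝ) + 1) / 2 - (d : ℝ))) + 1 / 2 by ring]
        rfl
      have hsum2 : (∑ k ∈ Finset.range (d + 1),
            ((ascPochhammer ℝ k).eval (-(g : ℝ) / 2 + (m : ℝ) / 2 + 1 - d)
                * (ascPochhammer ℝ k).eval (-(g : ℝ) / 2 + ((m : ℝ) + 1) / 2 - d)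
                * (ascPochhammer ℝ k).eval (-(d : ℝ)))
              / ((ascPochhammer ℝ k).eval (((g : ℝ) + 1) / 2 - d)
                  * (ascPochhammer ℝ k).eval ((g : ℝ) / 2 - d)
                  * (k.factorial : ℝ)))
          = ∑ k ∈ Finset.range (d + 1),
              ae k (-(g : ℝ) / 2 + ((m : ℝ) + 1) / 2 - d)
                  * ae k ((-(g : ℝ) / 2 + ((m : ℝ) + 1) / 2 - d) + 1 / 2) * ae k (-(d : ℝ))
                / (ae k ((g : ℝ) / 2 - d)
                    * ae k (((g : ℝ) / 2 - d) + 1 / 2) * (k.factorial : ℝ)) := by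
        refine Finset.sum_congr rfl fun k _ => ?_
        rw [show -(g : ℝ) / 2 + (m : ℝ) / 2 + 1 - (d : ℝ)
              = (-(g : ℝ) / 2 + ((m : ℝ) + 1) / 2 - (d : ℝ)) + 1 / 2 by ring,
            show ((g : ℝ) + 1) / 2 - (d : ℝ) = (((g : ℝ) / 2 - (d : ℝ))) + 1 / 2 by ring]
        simp only [ae]
        ring
      rw [hsum1, hsum2]
      unfold TT
      rw [show ((g - 1 : ℕ) : ℝ) + 1 - (a : ℝ) - 2 * (d : ℝ)
            = 2 * (-(g : ℝ) / 2 + m / 2 + 1 - d) from by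
          rw [hacast, Nat.cast_sub (show 1 ≤ g by omega)]; push_cast; ring,
        show ((g - 1 : ℕ) : ℝ) + 1 = (g : ℝ) from by
          rw [Nat.cast_sub (show 1 ≤ g by omega)]; push_cast; ring,
        show ((g - 2 : ℕ) : ℝ) + 1 - (a : ℝ) - 2 * (d : ℝ)
            = 2 * (-(g : ℝ) / 2 + ((m : ℝ) + 1) / 2 - d) from by
          rw [hacast, Nat.cast_sub (show 2 ≤ g by omega)]; push_cast; ring,
        show ((g - 2 : ℕ) : ℝ) + 1 = (g : ℝ) - 1 from by
          rw [Nat.cast_sub (show 2 ≤ g by omega)]; push_cast; ring]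
      rw [← hS1, ← hS2]
      have hf1 : (g.factorial : ℝ) = de (2 * d) (g : ℝ) * ((g - 2 * d).factorial : ℝ) :=
        de_factorial g (2 * d) (by omega)
      have hf2 : ((g - 1).factorial : ℝ)
          = de (2 * d) ((g : ℝ) - 1) * ((g - 2 * d - 1).factorial : ℝ) := by
        have h := de_factorial (g - 1) (2 * d) (by omega)
        rw [show g - 1 - 2 * d = g - 2 * d - 1 from by omega,
          show ((g - 1 : ℕ) : ℝ) = (g : ℝ) - 1 from by
            rw [Nat.cast_sub (show 1 ≤ g by omega)]; push_cast; ring] at h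
        exact h
      rw [hf1, hf2]
      have n1 : (d.factorial : ℝ) ≠ 0 := Nat.cast_ne_zero.2 (Nat.factorial_ne_zero _)
      have n2 : ((a + d).factorial : ℝ) ≠ 0 := Nat.cast_ne_zero.2 (Nat.factorial_ne_zero _)
      have n3 : ((g - 2 * d).factorial : ℝ) ≠ 0 := Nat.cast_ne_zero.2 (Nat.factorial_ne_zero _)
      have n4 : ((g - 2 * d - 1).factorial : ℝ) ≠ 0 := Nat.cast_ne_zero.2 (Nat.factorial_ne_zero _)
      field_simp
end

section
/- For all real numbers g and m and every real z with |z| < 1/4, one has (2/(√(1+4z)+1))^{2g−2−m} · (1+4z)^{(g−1)/2} = exp( Σ_{n=1}^{∞} ((−1)^{n−1}/n)·[ C(2n−1, n−1)·m + (4^{n−1} − C(2n−1, n−1))·(2g−2) ]·zⁿ ), where C(2n−1,n−1) is a binomial coefficient and the series on the right converges absolutely. -/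
open Real Set

noncomputable def Efun (x : ℝ) : ℝ := ∑' k : ℕ, (-1 : ℝ) ^ k * (Nat.centralBinom k : ℝ) * x ^ k

lemma cb_le_four_pow (k : ℕ) : (Nat.centralBinom k : ℝ) ≤ 4 ^ k := by
  have h1 : Nat.centralBinom k ≤ (2 * k + 1).choose k :=
    Nat.choose_le_choose k (by omega)
  have h2 := Nat.choose_middle_le_pow k
  exact_mod_cast le_trans h1 h2

lemma summable_E {x : ℝ} (hx : |x| < 1 / 4) :
    Summable (fun k : ℕ => (-1 : ℝ) ^ k * (Nat.centralBinom k : ℝ) * x ^ k) := by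
  apply Summable.of_norm_bounded (g := fun k => (4 * |x|) ^ k)
    (summable_geometric_of_lt_one (by positivity) (by linarith))
  intro k
  have h1 := cb_le_four_pow k
  have h2 : (0:ℝ) ≤ (Nat.centralBinom k : ℝ) := by positivity
  calc ‖(-1 : ℝ) ^ k * (Nat.centralBinom k : ℝ) * x ^ k‖
      = (Nat.centralBinom k : ℝ) * |x| ^ k := by
        simp [norm_eq_abs, abs_mul, abs_pow, abs_of_nonneg h2]
    _ ≤ 4 ^ k * |x| ^ k := by
        have := abs_nonneg x
        gcongr
    _ = (4 * |x|) ^ k := (mul_pow _ _ _).symm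

lemma summable_E' {r : ℝ} (hr0 : 0 < r) (hr : r < 1 / 4) :
    Summable (fun k : ℕ => 4 * ((k : ℝ) * (4 * r) ^ (k - 1))) := by
  have h : Summable (fun k : ℕ => (k : ℝ) * (4 * r) ^ (k - 1)) := by
    have hs : Summable (fun k : ℕ => (k : ℝ) ^ 1 * (4 * r) ^ k) :=
      summable_pow_mul_geometric_of_norm_lt_one 1
        (by rw [norm_eq_abs, abs_of_nonneg (by positivity)]; linarith)
    have := hs.mul_left (4 * r)⁻¹
    apply this.congr
    intro k
    cases k with
    | zero => simp
    | succ n =>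
      have h4r : (4 * r) ≠ 0 := by positivity
      simp only [pow_one, Nat.add_sub_cancel]
      push_cast
      rw [pow_succ]
      field_simp
  exact h.mul_left 4

lemma E_closed {y : ℝ} (hy : |y| < 1 / 4) : Efun y = 1 / Real.sqrt (1 + 4 * y) := by
  set r : ℝ := (|y| + 1 / 4) / 2 with hrdef
  have hay := abs_nonneg y
  have hr0 : 0 < r := by positivity
  have hr4 : r < 1 / 4 := by simp only [hrdef]; linarith
  have hyr : |y| < r := by simp only [hrdef]; linarith
  set t : Set ℝ := Ioo (-r) r with htdef
  have hmem : ∀ x : ℝ, x ∈ t → |x| < r := fun x hx => abs_lt.2 ⟨hx.1, hx.2⟩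
  have hmem' : ∀ x : ℝ, |x| < r → x ∈ t := fun x hx => ⟨(abs_lt.1 hx).1, (abs_lt.1 hx).2⟩
  have h0t : (0:ℝ) ∈ t := hmem' 0 (by simpa using hr0)
  have hyt : y ∈ t := hmem' y hyr
  set e : ℕ → ℝ → ℝ := fun k x => (-1 : ℝ) ^ k * (Nat.centralBinom k : ℝ) * x ^ k with hedef
  set e' : ℕ → ℝ → ℝ := fun k x => (-1 : ℝ) ^ k * (Nat.centralBinom k : ℝ) * ((k : ℝ) * x ^ (k - 1)) with he'def
  have hderiv : ∀ (k : ℕ), ∀ x ∈ t, HasDerivAt (e k) (e' k x) x := by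
    intro k x _
    exact (hasDerivAt_pow k x).const_mul _
  have hbound : ∀ (k : ℕ), ∀ x ∈ t, ‖e' k x‖ ≤ 4 * ((k : ℝ) * (4 * r) ^ (k - 1)) := by
    intro k x hx
    have hxr := (hmem x hx).le
    have hcb : (0:ℝ) ≤ (Nat.centralBinom k : ℝ) := by positivity
    have habs : ‖e' k x‖ = (Nat.centralBinom k : ℝ) * ((k : ℝ) * |x| ^ (k - 1)) := by
      simp [he'def, norm_eq_abs, abs_mul, abs_pow, abs_of_nonneg hcb,
        abs_of_nonneg (Nat.cast_nonneg (α := ℝ) k)]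
    rw [habs]
    cases k with
    | zero => simp
    | succ n =>
      simp only [Nat.add_sub_cancel]
      have hxn : |x| ^ n ≤ r ^ n := pow_le_pow_left₀ (abs_nonneg x) hxr n
      have h1 : (Nat.centralBinom (n+1) : ℝ) ≤ 4 ^ (n+1) := cb_le_four_pow (n+1)
      push_cast
      calc (Nat.centralBinom (n+1) : ℝ) * (((n:ℝ)+1) * |x| ^ n)
          ≤ 4 ^ (n+1) * (((n:ℝ)+1) * r ^ n) := by
            have hn1 : (0:ℝ) ≤ (n:ℝ)+1 := by positivity
            gcongr
        _ = 4 * (((n:ℝ)+1) * (4 * r) ^ n) := by rw [mul_pow]; ring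
  have hsum0 : Summable fun k => e k (0:ℝ) :=
    summable_E (by rw [abs_zero]; linarith)
  have hE : ∀ x ∈ t, HasDerivAt Efun (∑' k, e' k x) x := by
    intro x hx
    exact hasDerivAt_tsum_of_isPreconnected (summable_E' hr0 hr4) isOpen_Ioo
      (convex_Ioo _ _).isPreconnected hderiv hbound h0t hsum0 hx
  -- the ODE : (1+4x) * D x + 2 * Efun x = 0
  have hODE : ∀ x ∈ t, (1 + 4 * x) * (∑' k, e' k x) + 2 * Efun x = 0 := by
    intro x hx
    have hx4 : |x| < 1 / 4 := lt_trans (hmem x hx) hr4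
    have hsume' : Summable fun k => e' k x :=
      Summable.of_norm_bounded (summable_E' hr0 hr4) (fun k => hbound k x hx)
    have S1 : HasSum (fun k => e' k x) (∑' k, e' k x) := hsume'.hasSum
    have S2 : HasSum (fun k => e' (k + 1) x) (∑' k, e' k x) := by
      refine (hasSum_nat_add_iff (f := fun k => e' k x) 1).mpr ?_
      simpa [he'def] using S1
    have S3 : HasSum (fun k => e k x) (Efun x) := (summable_E hx4).hasSum
    have S4 : HasSum (fun k : ℕ => (k : ℝ) * e k x) (x * ∑' k, e' k x) := by
      refine HasSum.congr_fun (S1.mul_left x) ?_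
      intro k
      cases k with
      | zero => simp [hedef, he'def]
      | succ n =>
        simp only [hedef, he'def, Nat.add_sub_cancel]
        push_cast
        rw [pow_succ]
        ring
    have S5 : HasSum (fun k : ℕ => e' (k+1) x + (4 * ((k:ℝ) * e k x) + 2 * e k x))
        ((∑' k, e' k x) + (4 * (x * ∑' k, e' k x) + 2 * Efun x)) :=
      S2.add ((S4.mul_left 4).add (S3.mul_left 2))
    have hzero : ∀ k : ℕ, e' (k+1) x + (4 * ((k:ℝ) * e k x) + 2 * e k x) = 0 := by
      intro k
      have hrec : ((k:ℝ) + 1) * (Nat.centralBinom (k+1) : ℝ)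
          = (4 * (k:ℝ) + 2) * (Nat.centralBinom k : ℝ) := by
        have := Nat.succ_mul_centralBinom_succ k
        have h2 := congrArg (Nat.cast (R := ℝ)) this
        push_cast at h2
        push_cast
        linarith
      simp only [hedef, he'def, Nat.add_sub_cancel]
      push_cast
      linear_combination (-(-1:ℝ)^k * x^k) * hrec
    have : (∑' k, e' k x) + (4 * (x * ∑' k, e' k x) + 2 * Efun x) = 0 := by
      have h0 : HasSum (fun _ : ℕ => (0:ℝ)) 0 := hasSum_zero
      exact ((S5.congr_fun fun k => (hzero k).symm).unique h0)
    linarith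
  have hIccsub : ∀ x ∈ t, Icc (min 0 x) (max 0 x) ⊆ t := by
    intro x hx w hw
    exact ⟨lt_of_lt_of_le (lt_min h0t.1 hx.1) hw.1, lt_of_le_of_lt hw.2 (max_lt h0t.2 hx.2)⟩
  have hE0 : Efun 0 = 1 := by
    unfold Efun
    rw [tsum_eq_single 0]
    · simp
    · intro k hk
      simp [zero_pow hk]
  have hΦ : ∀ x ∈ t, HasDerivAt (fun w => Efun w ^ 2 * (1 + 4 * w)) 0 x := by
    intro x hx
    have h1 := hE x hx
    have h2 : HasDerivAt (fun w : ℝ => 1 + 4 * w) 4 x := by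
      simpa using ((hasDerivAt_id x).const_mul 4).const_add 1
    have h3 := (h1.pow 2).mul h2
    refine h3.congr_deriv ?_
    push_cast
    simp only [Pi.pow_apply]
    linear_combination (2 * Efun x) * hODE x hx
  have hconst : ∀ x ∈ t, Efun x ^ 2 * (1 + 4 * x) = 1 := by
    intro x hx
    have hcont : ContinuousOn (fun w => Efun w ^ 2 * (1 + 4 * w)) (Icc (min 0 x) (max 0 x)) :=
      fun w hw => ((hΦ w (hIccsub x hx hw)).continuousAt).continuousWithinAt
    have hcst := constant_of_has_deriv_right_zero hcont
      (fun w hw => (hΦ w (hIccsub x hx (Ico_subset_Icc_self hw))).hasDerivWithinAt)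
    have e1 := hcst x ⟨min_le_right 0 x, le_max_right 0 x⟩
    have e2 := hcst 0 ⟨min_le_left 0 x, le_max_left 0 x⟩
    rw [e1, ← e2, hE0]
    norm_num
  have hne : ∀ w ∈ t, Efun w ≠ 0 := by
    intro w hw hw0
    have := hconst w hw
    rw [hw0] at this
    norm_num at this
  have hpos : 0 < Efun y := by
    by_contra h
    push_neg at h
    have hylt : Efun y < 0 := lt_of_le_of_ne h (hne y hyt)
    have hcont : ContinuousOn Efun (Icc (min 0 y) (max 0 y)) :=
      fun w hw => ((hE w (hIccsub y hyt hw)).continuousAt).continuousWithinAt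
    rcases le_total 0 y with hy0 | hy0
    · have hmm : min 0 y = 0 := min_eq_left hy0
      have hmm' : max 0 y = y := max_eq_right hy0
      rw [hmm, hmm'] at hcont
      have := intermediate_value_Icc' hy0 hcont
      have h0mem : (0:ℝ) ∈ Icc (Efun y) (Efun 0) := by rw [hE0]; exact ⟨hylt.le, by norm_num⟩
      obtain ⟨w, hw, hw0⟩ := this h0mem
      have : w ∈ t := by
        have := hIccsub y hyt
        rw [hmm, hmm'] at this
        exact this hw
      exact hne w this hw0
    · have hmm : min 0 y = y := min_eq_right hy0
      have hmm' : max 0 y = 0 := max_eq_left hy0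
      rw [hmm, hmm'] at hcont
      have := intermediate_value_Icc hy0 hcont
      have h0mem : (0:ℝ) ∈ Icc (Efun y) (Efun 0) := by rw [hE0]; exact ⟨hylt.le, by norm_num⟩
      obtain ⟨w, hw, hw0⟩ := this h0mem
      have : w ∈ t := by
        have := hIccsub y hyt
        rw [hmm, hmm'] at this
        exact this hw
      exact hne w this hw0
  have h14 : 0 < 1 + 4 * y := by
    have := (abs_lt.1 hy).1
    linarith
  have hsq := hconst y hyt
  have h2 : Efun y ^ 2 = 1 / (1 + 4 * y) := by
    field_simp
    linarith [hsq]
  calc Efun y = Real.sqrt (Efun y ^ 2) := (Real.sqrt_sq hpos.le).symm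
    _ = Real.sqrt (1 / (1 + 4 * y)) := by rw [h2]
    _ = 1 / Real.sqrt (1 + 4 * y) := by rw [one_div, one_div, Real.sqrt_inv]

lemma hasSumE {y : ℝ} (hy : |y| < 1 / 4) :
    HasSum (fun k : ℕ => (-1 : ℝ) ^ k * (Nat.centralBinom k : ℝ) * y ^ k)
      (1 / Real.sqrt (1 + 4 * y)) := by
  have h := (summable_E hy).hasSum
  rwa [show (∑' k : ℕ, (-1 : ℝ) ^ k * (Nat.centralBinom k : ℝ) * y ^ k) = Efun y from rfl,
    E_closed hy] at h

lemma cb_succ (k : ℕ) : Nat.centralBinom (k + 1) = 2 * (2 * k + 1).choose k := by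
  rw [Nat.centralBinom, show 2 * (k + 1) = (2 * k + 1) + 1 from by ring, Nat.choose_succ_succ,
    Nat.choose_symm_half]
  ring

lemma hasSumA {y : ℝ} (hy : |y| < 1 / 4) :
    HasSum (fun k : ℕ => (-1 : ℝ) ^ k * ((2 * k + 1).choose k : ℝ) * y ^ (k + 1))
      ((1 - 1 / Real.sqrt (1 + 4 * y)) / 2) := by
  have h1 := hasSumE hy
  have h2 : HasSum (fun k : ℕ => (-1 : ℝ) ^ (k+1) * (Nat.centralBinom (k+1) : ℝ) * y ^ (k+1))
      (1 / Real.sqrt (1 + 4 * y) - 1) := by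
    refine (hasSum_nat_add_iff
      (f := fun k : ℕ => (-1 : ℝ) ^ k * (Nat.centralBinom k : ℝ) * y ^ k) 1).mpr ?_
    simpa using h1
  have h3 := h2.mul_left (-1/2 : ℝ)
  have h4 : ∀ k : ℕ, (-1 : ℝ) ^ k * ((2 * k + 1).choose k : ℝ) * y ^ (k + 1)
      = (-1/2 : ℝ) * ((-1 : ℝ) ^ (k+1) * (Nat.centralBinom (k+1) : ℝ) * y ^ (k+1)) := by
    intro k
    rw [cb_succ k]
    push_cast
    ring
  have h5 := HasSum.congr_fun h3 h4
  convert h5 using 1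
  · rfl
  ring

lemma hasSumD {y : ℝ} (hy : |y| < 1 / 4) :
    HasSum (fun k : ℕ => (-1 : ℝ) ^ k * ((2 * k + 1).choose k : ℝ) * y ^ k)
      (2 / (Real.sqrt (1 + 4 * y) * (Real.sqrt (1 + 4 * y) + 1))) := by
  have h14 : 0 < 1 + 4 * y := by have := (abs_lt.1 hy).1; linarith
  have hs0 : 0 < Real.sqrt (1 + 4 * y) := Real.sqrt_pos.2 h14
  rcases eq_or_ne y 0 with rfl | hy0
  · have h := hasSum_single
      (f := fun k : ℕ => (-1 : ℝ) ^ k * ((2 * k + 1).choose k : ℝ) * (0:ℝ) ^ k) 0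
      (by intro b hb; simp [zero_pow hb])
    norm_num at h
    convert h using 2
    norm_num [Real.sqrt_one]
  · have h1 := (hasSumA hy).div_const y
    have h2 : ∀ k : ℕ, (-1:ℝ)^k * ((2*k+1).choose k : ℝ) * y ^ k
        = (-1:ℝ)^k * ((2*k+1).choose k : ℝ) * y ^ (k+1) / y := by
      intro k
      rw [pow_succ]
      field_simp
    have h3 := HasSum.congr_fun h1 h2
    convert h3 using 1
    · rfl
    have hs2 : Real.sqrt (1 + 4 * y) ^ 2 = 1 + 4 * y := Real.sq_sqrt h14.le
    have hsne : Real.sqrt (1 + 4 * y) ≠ 0 := ne_of_gt hs0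
    have hs1ne : Real.sqrt (1 + 4 * y) + 1 ≠ 0 := by positivity
    rw [div_div, div_eq_div_iff (mul_ne_zero hsne hs1ne) (mul_ne_zero two_ne_zero hy0)]
    have h6 : (1 - 1 / Real.sqrt (1+4*y)) * (Real.sqrt (1+4*y) * (Real.sqrt (1+4*y) + 1))
        = Real.sqrt (1+4*y) ^ 2 - 1 := by
      field_simp
      ring
    rw [h6, hs2]
    ring

lemma summable_F {x : ℝ} (hx : |x| < 1 / 4) :
    Summable (fun k : ℕ => (-1 : ℝ) ^ k / ((k:ℝ)+1) * ((2 * k + 1).choose k : ℝ) * x ^ (k + 1)) := by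
  apply Summable.of_norm_bounded (g := fun k => |x| * (4 * |x|) ^ k)
    ((summable_geometric_of_lt_one (by positivity) (by linarith)).mul_left _)
  intro k
  have h2' : ((2*k+1).choose k : ℝ) ≤ 4 ^ k := by exact_mod_cast Nat.choose_middle_le_pow k
  have hc : (0:ℝ) ≤ ((2*k+1).choose k : ℝ) := Nat.cast_nonneg _
  have hk1 : (0:ℝ) < (k:ℝ) + 1 := by positivity
  calc ‖(-1 : ℝ) ^ k / ((k:ℝ)+1) * ((2 * k + 1).choose k : ℝ) * x ^ (k + 1)‖
      = 1 / ((k:ℝ)+1) * (((2*k+1).choose k : ℝ) * |x| ^ (k+1)) := by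
        rw [norm_eq_abs, abs_mul, abs_mul, abs_div, abs_pow, abs_pow, abs_neg, abs_one, one_pow,
          abs_of_nonneg hc, abs_of_nonneg hk1.le]
        ring
    _ ≤ 1 * (4 ^ k * |x| ^ (k+1)) := by
        have hd : 1 / ((k:ℝ)+1) ≤ 1 := by
          rw [div_le_one hk1]
          linarith [Nat.cast_nonneg (α := ℝ) k]
        gcongr
    _ = |x| * (4 * |x|) ^ k := by
        rw [mul_pow, pow_succ]
        ring

lemma hasSumF {z : ℝ} (hz : |z| < 1 / 4) :
    HasSum (fun k : ℕ => (-1 : ℝ) ^ k / ((k:ℝ)+1) * ((2 * k + 1).choose k : ℝ) * z ^ (k + 1))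
      (Real.log ((1 + Real.sqrt (1 + 4 * z)) / 2)) := by
  set r : ℝ := (|z| + 1 / 4) / 2 with hrdef
  have haz := abs_nonneg z
  have hr0 : 0 < r := by positivity
  have hr4 : r < 1 / 4 := by simp only [hrdef]; linarith
  have hzr : |z| < r := by simp only [hrdef]; linarith
  set t : Set ℝ := Ioo (-r) r with htdef
  have hmem : ∀ x : ℝ, x ∈ t → |x| < r := fun x hx => abs_lt.2 ⟨hx.1, hx.2⟩
  have hmem' : ∀ x : ℝ, |x| < r → x ∈ t := fun x hx => ⟨(abs_lt.1 hx).1, (abs_lt.1 hx).2⟩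
  have h0t : (0:ℝ) ∈ t := hmem' 0 (by simpa using hr0)
  have hzt : z ∈ t := hmem' z hzr
  have hIccsub : ∀ x ∈ t, Icc (min 0 x) (max 0 x) ⊆ t := by
    intro x hx w hw
    exact ⟨lt_of_lt_of_le (lt_min h0t.1 hx.1) hw.1, lt_of_le_of_lt hw.2 (max_lt h0t.2 hx.2)⟩
  set f : ℕ → ℝ → ℝ := fun k x => (-1 : ℝ) ^ k / ((k:ℝ)+1) * ((2 * k + 1).choose k : ℝ) * x ^ (k + 1) with hfdef
  set f' : ℕ → ℝ → ℝ := fun k x => (-1 : ℝ) ^ k * ((2 * k + 1).choose k : ℝ) * x ^ k with hf'def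
  have hderiv : ∀ (k : ℕ), ∀ x ∈ t, HasDerivAt (f k) (f' k x) x := by
    intro k x _
    have h1 := (hasDerivAt_pow (k+1) x).const_mul ((-1 : ℝ) ^ k / ((k:ℝ)+1) * ((2 * k + 1).choose k : ℝ))
    refine h1.congr_deriv ?_
    have hk1 : ((k:ℝ)+1) ≠ 0 := by positivity
    simp only [Nat.add_sub_cancel]
    push_cast
    field_simp
    ring
  have hbound : ∀ (k : ℕ), ∀ x ∈ t, ‖f' k x‖ ≤ (4 * r) ^ k := by
    intro k x hx
    have hxr := (hmem x hx).le
    have h2' : ((2*k+1).choose k : ℝ) ≤ 4 ^ k := by exact_mod_cast Nat.choose_middle_le_pow k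
    have hc : (0:ℝ) ≤ ((2*k+1).choose k : ℝ) := Nat.cast_nonneg _
    calc ‖f' k x‖ = ((2*k+1).choose k : ℝ) * |x| ^ k := by
          simp [hf'def, norm_eq_abs, abs_mul, abs_pow, abs_of_nonneg hc]
      _ ≤ 4 ^ k * r ^ k := by
          gcongr

      _ = (4 * r) ^ k := (mul_pow _ _ _).symm
  have hsum0 : Summable fun k => f k (0:ℝ) := by
    apply summable_of_ne_finset_zero (s := ∅)
    intro k _
    simp [hfdef]
  have hF : ∀ x ∈ t, HasDerivAt (fun w => ∑' k, f k w) (∑' k, f' k x) x := by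
    intro x hx
    exact hasDerivAt_tsum_of_isPreconnected
      (summable_geometric_of_lt_one (by positivity) (by linarith)) isOpen_Ioo
      (convex_Ioo _ _).isPreconnected hderiv hbound h0t hsum0 hx
  have hDval : ∀ x ∈ t, (∑' k, f' k x)
      = 2 / (Real.sqrt (1 + 4 * x) * (Real.sqrt (1 + 4 * x) + 1)) := by
    intro x hx
    exact (hasSumD (lt_trans (hmem x hx) hr4)).tsum_eq
  have hG : ∀ x ∈ t, HasDerivAt (fun w => Real.log (1 + Real.sqrt (1 + 4 * w)))
      (2 / (Real.sqrt (1 + 4 * x) * (Real.sqrt (1 + 4 * x) + 1))) x := by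
    intro x hx
    have h14 : 0 < 1 + 4 * x := by
      have := (abs_lt.1 (lt_trans (hmem x hx) hr4)).1
      linarith
    have hs0 : 0 < Real.sqrt (1 + 4 * x) := Real.sqrt_pos.2 h14
    have hin : HasDerivAt (fun w : ℝ => 1 + 4 * w) 4 x := by
      simpa using ((hasDerivAt_id x).const_mul 4).const_add 1
    have hsq : HasDerivAt (fun w : ℝ => Real.sqrt (1 + 4 * w)) (4 / (2 * Real.sqrt (1 + 4 * x))) x :=
      hin.sqrt (ne_of_gt h14)
    have hsq1 : HasDerivAt (fun w : ℝ => 1 + Real.sqrt (1 + 4 * w)) (4 / (2 * Real.sqrt (1 + 4 * x))) x :=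
      hsq.const_add 1
    have hlog := hsq1.log (by positivity)
    convert hlog using 1
    rw [div_div, div_eq_div_iff (mul_ne_zero hs0.ne' (by positivity))
      (mul_ne_zero (mul_ne_zero two_ne_zero hs0.ne') (by positivity))]
    ring
  have hK : ∀ x ∈ t, HasDerivAt (fun w => (∑' k, f k w) - Real.log (1 + Real.sqrt (1 + 4 * w))) 0 x := by
    intro x hx
    have := (hF x hx).sub (hG x hx)
    rwa [hDval x hx, sub_self] at this
  have hconst : (∑' k, f k z) - Real.log (1 + Real.sqrt (1 + 4 * z))
      = (∑' k, f k 0) - Real.log (1 + Real.sqrt (1 + 4 * 0)) := by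
    have hcont : ContinuousOn (fun w => (∑' k, f k w) - Real.log (1 + Real.sqrt (1 + 4 * w)))
        (Icc (min 0 z) (max 0 z)) :=
      fun w hw => ((hK w (hIccsub z hzt hw)).continuousAt).continuousWithinAt
    have hcst := constant_of_has_deriv_right_zero hcont
      (fun w hw => (hK w (hIccsub z hzt (Ico_subset_Icc_self hw))).hasDerivWithinAt)
    have e1 := hcst z ⟨min_le_right 0 z, le_max_right 0 z⟩
    have e2 := hcst 0 ⟨min_le_left 0 z, le_max_left 0 z⟩
    rw [e1, ← e2]
  have hF0 : (∑' k, f k (0:ℝ)) = 0 := by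
    have : ∀ k : ℕ, f k (0:ℝ) = 0 := by intro k; simp [hfdef]
    simp [this]
  have h14 : 0 < 1 + 4 * z := by
    have := (abs_lt.1 hz).1
    linarith
  have hs0 : 0 < Real.sqrt (1 + 4 * z) := Real.sqrt_pos.2 h14
  have hFz : (∑' k, f k z) = Real.log ((1 + Real.sqrt (1 + 4 * z)) / 2) := by
    have h2 : Real.log ((1 + Real.sqrt (1 + 4 * z)) / 2)
        = Real.log (1 + Real.sqrt (1 + 4 * z)) - Real.log 2 :=
      Real.log_div (by positivity) two_ne_zero
    have h3 : Real.log (1 + Real.sqrt (1 + 4 * (0:ℝ))) = Real.log 2 := by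
      norm_num
    rw [h2]
    have := hconst
    rw [hF0, h3] at this
    linarith
  have := (summable_F hz).hasSum
  rwa [show (∑' k : ℕ, (-1 : ℝ) ^ k / ((k:ℝ)+1) * ((2 * k + 1).choose k : ℝ) * z ^ (k + 1))
    = ∑' k, f k z from rfl, hFz] at this

lemma hasSumB {z : ℝ} (hz : |z| < 1 / 4) :
    HasSum (fun k : ℕ => (-1 : ℝ) ^ k / ((k:ℝ)+1) * (4:ℝ) ^ k * z ^ (k + 1))
      (Real.log (1 + 4 * z) / 4) := by
  have h4 : |(-(4*z))| < 1 := by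
    rw [abs_neg, abs_mul, abs_of_nonneg (by norm_num : (0:ℝ) ≤ 4)]
    linarith
  have h := Real.hasSum_pow_div_log_of_abs_lt_one h4
  have h2 := h.mul_left (-1/4 : ℝ)
  have h3 : ∀ k : ℕ, (-1:ℝ)^k/((k:ℝ)+1) * 4^k * z^(k+1)
      = (-1/4 : ℝ) * ((-(4*z))^(k+1)/((k:ℝ)+1)) := by
    intro k
    have hk1 : ((k:ℝ)+1) ≠ 0 := by positivity
    rw [show (-(4*z)) = (-1) * (4*z) from by ring, mul_pow, mul_pow, pow_succ (-1:ℝ) k]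
    field_simp
    ring
  have h5 := HasSum.congr_fun h2 h3
  convert h5 using 1
  · rfl
  rw [sub_neg_eq_add]
  ring

theorem exponential_form_of_generating_function (g m z : ℝ) (hz : |z| < 1 / 4) :
    Summable (fun k : ℕ =>
      |((-1 : ℝ) ^ k / ((k : ℝ) + 1)) *
          ((Nat.choose (2 * k + 1) k : ℝ) * m
            + ((4 : ℝ) ^ k - (Nat.choose (2 * k + 1) k : ℝ)) * (2 * g - 2))
          * z ^ (k + 1)|) ∧
    (2 / (Real.sqrt (1 + 4 * z) + 1)) ^ (2 * g - 2 - m) * (1 + 4 * z) ^ ((g - 1) / 2) =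
      Real.exp (∑' k : ℕ,
        ((-1 : ℝ) ^ k / ((k : ℝ) + 1)) *
          ((Nat.choose (2 * k + 1) k : ℝ) * m
            + ((4 : ℝ) ^ k - (Nat.choose (2 * k + 1) k : ℝ)) * (2 * g - 2))
          * z ^ (k + 1)) := by
  have h14 : 0 < 1 + 4 * z := by
    have := (abs_lt.1 hz).1
    linarith
  have hs0 : 0 < Real.sqrt (1 + 4 * z) := Real.sqrt_pos.2 h14
  have hT : HasSum (fun k : ℕ =>
      ((-1 : ℝ) ^ k / ((k : ℝ) + 1)) *
        ((Nat.choose (2 * k + 1) k : ℝ) * m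
          + ((4 : ℝ) ^ k - (Nat.choose (2 * k + 1) k : ℝ)) * (2 * g - 2)) * z ^ (k + 1))
      ((m - (2 * g - 2)) * Real.log ((1 + Real.sqrt (1 + 4 * z)) / 2)
        + (2 * g - 2) * (Real.log (1 + 4 * z) / 4)) := by
    have h1 := (hasSumF hz).mul_left (m - (2 * g - 2))
    have h2 := (hasSumB hz).mul_left (2 * g - 2)
    have h3 := h1.add h2
    refine HasSum.congr_fun h3 ?_
    intro k
    ring
  constructor
  · apply Summable.of_nonneg_of_le (fun k => abs_nonneg _) ?_
      (((summable_geometric_of_lt_one (by positivity) (by linarith : 4 * |z| < 1)).mul_left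
        ((|m| + |2 * g - 2|) * |z|)))
    intro k
    have hC : (0:ℝ) ≤ ((2*k+1).choose k : ℝ) := Nat.cast_nonneg _
    have hC4 : ((2*k+1).choose k : ℝ) ≤ 4 ^ k := by exact_mod_cast Nat.choose_middle_le_pow k
    have hk1 : (0:ℝ) < (k:ℝ) + 1 := by positivity
    have e1 : |(-1:ℝ)^k / ((k:ℝ)+1)| ≤ 1 := by
      rw [abs_div, abs_pow, abs_neg, abs_one, one_pow, abs_of_nonneg hk1.le, div_le_one hk1]
      linarith [Nat.cast_nonneg (α := ℝ) k]
    have e2 : |((2*k+1).choose k : ℝ) * m + ((4:ℝ)^k - ((2*k+1).choose k : ℝ)) * (2*g-2)|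
        ≤ 4^k * (|m| + |2*g-2|) := by
      calc |((2*k+1).choose k : ℝ) * m + ((4:ℝ)^k - ((2*k+1).choose k : ℝ)) * (2*g-2)|
          ≤ |((2*k+1).choose k : ℝ) * m| + |((4:ℝ)^k - ((2*k+1).choose k : ℝ)) * (2*g-2)| :=
            by exact abs_add_le _ _
        _ = ((2*k+1).choose k : ℝ) * |m| + |(4:ℝ)^k - ((2*k+1).choose k : ℝ)| * |2*g-2| := by
            rw [abs_mul, abs_mul, abs_of_nonneg hC]
        _ ≤ 4^k * |m| + 4^k * |2*g-2| := by
            gcongr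
            · rw [abs_of_nonneg (by linarith)]
              linarith
        _ = 4^k * (|m| + |2*g-2|) := by ring
    calc |((-1 : ℝ) ^ k / ((k : ℝ) + 1)) *
          ((Nat.choose (2 * k + 1) k : ℝ) * m
            + ((4 : ℝ) ^ k - (Nat.choose (2 * k + 1) k : ℝ)) * (2 * g - 2)) * z ^ (k + 1)|
        = |(-1:ℝ)^k/((k:ℝ)+1)| *
          |(Nat.choose (2 * k + 1) k : ℝ) * m
            + ((4 : ℝ) ^ k - (Nat.choose (2 * k + 1) k : ℝ)) * (2 * g - 2)| * |z|^(k+1) := by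
          rw [abs_mul, abs_mul, abs_pow]
      _ ≤ 1 * (4^k * (|m| + |2*g-2|)) * |z|^(k+1) := by
          gcongr
      _ = (|m| + |2*g-2|) * |z| * (4*|z|)^k := by
          rw [mul_pow, pow_succ]
          ring
  · rw [hT.tsum_eq]
    have hs1 : (0:ℝ) < Real.sqrt (1 + 4 * z) + 1 := by linarith
    have hb2 : (0:ℝ) < 2 / (Real.sqrt (1 + 4 * z) + 1) := div_pos two_pos hs1
    rw [Real.rpow_def_of_pos hb2, Real.rpow_def_of_pos h14, ← Real.exp_add]
    congr 1
    have hlog1 : Real.log (2 / (Real.sqrt (1 + 4 * z) + 1))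
        = Real.log 2 - Real.log (Real.sqrt (1 + 4 * z) + 1) :=
      Real.log_div two_ne_zero hs1.ne'
    have hlog2 : Real.log ((1 + Real.sqrt (1 + 4 * z)) / 2)
        = Real.log (Real.sqrt (1 + 4 * z) + 1) - Real.log 2 := by
      rw [show (1:ℝ) + Real.sqrt (1 + 4 * z) = Real.sqrt (1 + 4 * z) + 1 from
        add_comm 1 _]
      exact Real.log_div hs1.ne' two_ne_zero
    rw [hlog1, hlog2]
    ring
end

section
/- Let d ≥ 2 be an integer. For a subgraph G of the complete graph on the vertex set {1,…,d} and for 2 ≤ j ≤ d, let indeg(G,j) = #{ i < j : {i,j} is an edge of G }, and set w_G = ∏_{j=2}^{d} (indeg(G,j))!. Then, summing over all spanning trees T of the complete graph on {1,…,d}: (2d−1) · Σ_T w_T = C(2d−1, d−1) · (d−1)!. -/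
set_option maxHeartbeats 1000000
open Finset SimpleGraph
open scoped Classical
/-- `indeg(G,j) = #{i < j : {i,j} is an edge of G}`, the indegree of vertex `j`. -/
noncomputable def indeg {d : ℕ} (G : SimpleGraph (Fin d)) (j : Fin d) : ℕ :=
  {i : Fin d | i < j ∧ G.Adj i j}.ncard

/-- The weight `w_G = ∏_j (indeg(G,j))!` of a subgraph of the complete graph. -/
noncomputable def graphWeight {d : ℕ} (G : SimpleGraph (Fin d)) : ℕ :=
  ∏ j : Fin d, (indeg G j).factorial

namespace WSTC
variable {d : ℕ}

-- copies from previous chunks (will merge later)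
def IsTreeOn (s : Finset (Fin d)) (G : SimpleGraph (Fin d)) : Prop :=
  (∀ ⦃a b⦄, G.Adj a b → a ∈ s ∧ b ∈ s) ∧ (∀ a ∈ s, ∀ b ∈ s, G.Reachable a b) ∧ G.IsAcyclic

lemma acyclic_mono {G H : SimpleGraph (Fin d)} (h : G ≤ H) (hH : H.IsAcyclic) : G.IsAcyclic :=
  fun _ c hc => hH (c.mapLe h) (hc.mapLe h)

lemma mem_of_walk {G : SimpleGraph (Fin d)} {s : Finset (Fin d)}
    (hG : ∀ ⦃a b⦄, G.Adj a b → a ∈ s ∧ b ∈ s) {a x : Fin d} (p : G.Walk a x) (ha : a ∈ s) :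
    x ∈ s := by
  induction p with
  | nil => exact ha
  | cons h q ih => exact ih ((hG h).2)

lemma walk_closed {G H : SimpleGraph (Fin d)} {B : Finset (Fin d)}
    (hcl : ∀ ⦃x y⦄, x ∈ B → G.Adj x y → y ∈ B)
    (hedge : ∀ ⦃x y⦄, x ∈ B → y ∈ B → G.Adj x y → H.Adj x y)
    {a b : Fin d} (p : G.Walk a b) (ha : a ∈ B) :
    b ∈ B ∧ ∀ e ∈ p.edges, e ∈ H.edgeSet := by
  induction p with
  | nil => exact ⟨ha, by simp⟩
  | @cons u c w h q ih =>
    have hc : c ∈ B := hcl ha h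
    obtain ⟨hb, he⟩ := ih hc
    refine ⟨hb, ?_⟩
    intro e hee
    rw [Walk.edges_cons, List.mem_cons] at hee
    rcases hee with rfl | hee
    · exact (hedge ha hc h)
    · exact he e hee

lemma reach_closed {G H : SimpleGraph (Fin d)} {B : Finset (Fin d)}
    (hcl : ∀ ⦃x y⦄, x ∈ B → G.Adj x y → y ∈ B)
    (hedge : ∀ ⦃x y⦄, x ∈ B → y ∈ B → G.Adj x y → H.Adj x y)
    {a b : Fin d} (h : G.Reachable a b) (ha : a ∈ B) : H.Reachable a b := by
  obtain ⟨p⟩ := h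
  exact ⟨p.transfer H (walk_closed hcl hedge p ha).2⟩

lemma mem_of_reach_closed {G : SimpleGraph (Fin d)} {B : Finset (Fin d)}
    (hcl : ∀ ⦃x y⦄, x ∈ B → G.Adj x y → y ∈ B)
    {a b : Fin d} (h : G.Reachable a b) (ha : a ∈ B) : b ∈ B := by
  obtain ⟨p⟩ := h
  exact (walk_closed hcl (fun x y _ _ h => h) p ha).1

def cliqueOn (B : Finset (Fin d)) : SimpleGraph (Fin d) where
  Adj a b := a ≠ b ∧ a ∈ B ∧ b ∈ B
  symm := ⟨by rintro a b ⟨h1, h2, h3⟩; exact ⟨h1.symm, h3, h2⟩⟩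
  loopless := ⟨fun a h => h.1 rfl⟩

@[simp] lemma cliqueOn_adj {B : Finset (Fin d)} {a b : Fin d} :
    (cliqueOn B).Adj a b ↔ a ≠ b ∧ a ∈ B ∧ b ∈ B := Iff.rfl

lemma delete_reach_aux {T : SimpleGraph (Fin d)} {v m x y : Fin d} (p : T.Walk x y) :
    (T.deleteEdges {s(v, m)}).Reachable x y ∨
      (T.deleteEdges {s(v, m)}).Reachable x v ∨ (T.deleteEdges {s(v, m)}).Reachable x m := by
  induction p with
  | nil => exact Or.inl (Reachable.refl _)
  | @cons u c w h q ih =>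
    by_cases he : s(u, c) = s(v, m)
    · rw [Sym2.eq_iff] at he
      rcases he with ⟨rfl, rfl⟩ | ⟨rfl, rfl⟩
      · exact Or.inr (Or.inl (Reachable.refl _))
      · exact Or.inr (Or.inr (Reachable.refl _))
    · have hD : (T.deleteEdges {s(v, m)}).Adj u c := by
        rw [SimpleGraph.deleteEdges_adj]
        exact ⟨h, by simpa using he⟩
      rcases ih with h' | h' | h'
      · exact Or.inl (hD.reachable.trans h')
      · exact Or.inr (Or.inl (hD.reachable.trans h'))
      · exact Or.inr (Or.inr (hD.reachable.trans h'))

lemma delete_reach {T : SimpleGraph (Fin d)} {v m x : Fin d} (h : T.Reachable x m) :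
    (T.deleteEdges {s(v, m)}).Reachable x v ∨ (T.deleteEdges {s(v, m)}).Reachable x m := by
  obtain ⟨p⟩ := h
  rcases delete_reach_aux (v := v) (m := m) p with h' | h' | h'
  · exact Or.inr h'
  · exact Or.inl h'
  · exact Or.inr h'

lemma not_reach_delete {T : SimpleGraph (Fin d)} (hT : T.IsAcyclic) {v m : Fin d}
    (hvm : T.Adj v m) : ¬ (T.deleteEdges {s(v, m)}).Reachable v m := by
  have hb := (isAcyclic_iff_forall_adj_isBridge.mp hT) hvm
  rw [isBridge_iff] at hb
  exact hb

/-! ### Split -/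

lemma indeg_eq_card (G : SimpleGraph (Fin d)) (j : Fin d) :
    indeg G j = (univ.filter (fun i => i < j ∧ G.Adj i j)).card := by
  rw [indeg, show {i : Fin d | i < j ∧ G.Adj i j} = ↑(univ.filter (fun i => i < j ∧ G.Adj i j))
    by ext i; simp]
  exact Set.ncard_coe_finset _

lemma indeg_eq_zero {G : SimpleGraph (Fin d)} {j : Fin d} (h : ∀ i, ¬ G.Adj i j) :
    indeg G j = 0 := by
  rw [indeg_eq_card, Finset.card_eq_zero, Finset.filter_eq_empty_iff]
  exact fun i _ hij => h i hij.2


noncomputable def splitB (T : SimpleGraph (Fin d)) (v m : Fin d) : Finset (Fin d) :=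
  univ.filter fun x => (T.deleteEdges {s(v, m)}).Reachable v x

noncomputable def part1 (T : SimpleGraph (Fin d)) (v m : Fin d) : SimpleGraph (Fin d) :=
  T.deleteEdges {s(v, m)} ⊓ cliqueOn (splitB T v m)

noncomputable def part2 (s : Finset (Fin d)) (T : SimpleGraph (Fin d)) (v m : Fin d) : SimpleGraph (Fin d) :=
  T.deleteEdges {s(v, m)} ⊓ cliqueOn (s \ splitB T v m)

def glue (T₁ T₂ : SimpleGraph (Fin d)) (v m : Fin d) : SimpleGraph (Fin d) :=
  T₁ ⊔ T₂ ⊔ fromEdgeSet {s(v, m)}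

section SplitLemmas

variable {s : Finset (Fin d)} {m : Fin d} {T : SimpleGraph (Fin d)} {v : Fin d}

lemma mem_splitB {x : Fin d} :
    x ∈ splitB T v m ↔ (T.deleteEdges {s(v, m)}).Reachable v x := by
  simp [splitB]

lemma splitB_closed {x y : Fin d} (hx : x ∈ splitB T v m)
    (hxy : (T.deleteEdges {s(v, m)}).Adj x y) : y ∈ splitB T v m := by
  rw [mem_splitB] at hx ⊢
  exact hx.trans hxy.reachable

lemma v_mem_splitB : v ∈ splitB T v m := mem_splitB.mpr (Reachable.refl _)

variable (hT : IsTreeOn s T) (hv : T.Adj v m)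

include hT hv

lemma m_not_mem_splitB : m ∉ splitB T v m := by
  rw [mem_splitB]
  exact not_reach_delete hT.2.2 hv

lemma splitB_subset : splitB T v m ⊆ s := by
  intro x hx
  rw [mem_splitB] at hx
  obtain ⟨p⟩ := hx
  exact mem_of_walk hT.1 (p.mapLe (SimpleGraph.deleteEdges_le _)) (hT.1 hv).1

lemma sdiff_reach {x : Fin d} (hx : x ∈ s \ splitB T v m) :
    (T.deleteEdges {s(v, m)}).Reachable m x := by
  rw [mem_sdiff] at hx
  rcases delete_reach (v := v) (hT.2.1 _ hx.1 _ (hT.1 hv).2) with h | h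
  · exact absurd (mem_splitB.mpr h.symm) hx.2
  · exact h.symm

lemma sdiff_closed (hmax : ∀ x ∈ s, x ≤ m) {x y : Fin d} (hx : x ∈ s \ splitB T v m)
    (hxy : (T.deleteEdges {s(v, m)}).Adj x y) : y ∈ s \ splitB T v m := by
  rw [mem_sdiff] at hx ⊢
  refine ⟨(hT.1 (SimpleGraph.deleteEdges_le _ hxy : T.Adj x y)).2, ?_⟩
  intro hy
  exact hx.2 (splitB_closed hy hxy.symm)

lemma part1_tree : IsTreeOn (splitB T v m) (part1 T v m) := by
  refine ⟨?_, ?_, ?_⟩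
  · rintro a b ⟨_, _, ha, hb⟩
    exact ⟨ha, hb⟩
  · intro a ha b hb
    rw [mem_splitB] at ha hb
    have hr : (T.deleteEdges {s(v, m)}).Reachable a b := ha.symm.trans hb
    refine reach_closed (fun x y hx h => splitB_closed hx h) ?_ hr (mem_splitB.mpr ha)
    intro x y hx hy h
    exact ⟨h, h.ne, hx, hy⟩
  · exact acyclic_mono (le_trans inf_le_left (SimpleGraph.deleteEdges_le _)) hT.2.2

lemma part2_tree (hmax : ∀ x ∈ s, x ≤ m) :
    IsTreeOn (s \ splitB T v m) (part2 s T v m) := by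
  refine ⟨?_, ?_, ?_⟩
  · rintro a b ⟨_, _, ha, hb⟩
    exact ⟨ha, hb⟩
  · intro a ha b hb
    have hra := sdiff_reach hT hv ha
    have hrb := sdiff_reach hT hv hb
    refine reach_closed (fun x y hx h => sdiff_closed hT hv hmax hx h) ?_ (hra.symm.trans hrb) ha
    intro x y hx hy h
    exact ⟨h, h.ne, hx, hy⟩
  · exact acyclic_mono (le_trans inf_le_left (SimpleGraph.deleteEdges_le _)) hT.2.2

lemma m_mem_sdiff (hm : m ∈ s) : m ∈ s \ splitB T v m :=
  mem_sdiff.mpr ⟨hm, m_not_mem_splitB hT hv⟩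

lemma adj_dichotomy {a b : Fin d} :
    T.Adj a b ↔ (part1 T v m).Adj a b ∨ (part2 s T v m).Adj a b ∨
      (a = v ∧ b = m) ∨ (a = m ∧ b = v) := by
  constructor
  · intro h
    by_cases he : s(a, b) = s(v, m)
    · rw [Sym2.eq_iff] at he
      tauto
    · have hD : (T.deleteEdges {s(v, m)}).Adj a b := by
        rw [SimpleGraph.deleteEdges_adj]; exact ⟨h, by simpa using he⟩
      have has : a ∈ s := (hT.1 h).1
      have hbs : b ∈ s := (hT.1 h).2
      by_cases haB : a ∈ splitB T v m
      · exact Or.inl ⟨hD, h.ne, haB, splitB_closed haB hD⟩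
      · have hbB : b ∉ splitB T v m := fun hbB => haB (splitB_closed hbB hD.symm)
        exact Or.inr (Or.inl ⟨hD, h.ne, mem_sdiff.mpr ⟨has, haB⟩, mem_sdiff.mpr ⟨hbs, hbB⟩⟩)
  · rintro (h | h | ⟨rfl, rfl⟩ | ⟨rfl, rfl⟩)
    · exact SimpleGraph.deleteEdges_le _ h.1
    · exact SimpleGraph.deleteEdges_le _ h.1
    · exact hv
    · exact hv.symm

lemma glue_split : glue (part1 T v m) (part2 s T v m) v m = T := by
  ext a b
  rw [glue, sup_adj, sup_adj, fromEdgeSet_adj, adj_dichotomy hT hv]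
  constructor
  · rintro ((h | h) | ⟨he, hne⟩)
    · tauto
    · tauto
    · rw [Set.mem_singleton_iff, Sym2.eq_iff] at he
      tauto
  · rintro (h | h | ⟨rfl, rfl⟩ | ⟨rfl, rfl⟩)
    · tauto
    · tauto
    · exact Or.inr ⟨rfl, hv.ne⟩
    · exact Or.inr ⟨Sym2.eq_swap, hv.ne'⟩

end SplitLemmas
section GlueLemmas

variable {s B : Finset (Fin d)} {m v : Fin d} {T₁ T₂ : SimpleGraph (Fin d)}
variable (hBs : B ⊆ s) (hmB : m ∉ B) (hvB : v ∈ B) (hm : m ∈ s)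
variable (h₁ : IsTreeOn B T₁) (h₂ : IsTreeOn (s \ B) T₂)

include hmB hvB

lemma glue_vne : v ≠ m := fun h => hmB (h ▸ hvB)

include h₁ h₂

lemma glue_adj {a b : Fin d} :
    (glue T₁ T₂ v m).Adj a b ↔ T₁.Adj a b ∨ T₂.Adj a b ∨ (a = v ∧ b = m) ∨ (a = m ∧ b = v) := by
  have hne := glue_vne hmB hvB
  rw [glue, sup_adj, sup_adj, fromEdgeSet_adj]
  constructor
  · rintro ((h | h) | ⟨he, hne'⟩)
    · tauto
    · tauto
    · rw [Set.mem_singleton_iff, Sym2.eq_iff] at he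
      tauto
  · rintro (h | h | ⟨rfl, rfl⟩ | ⟨rfl, rfl⟩)
    · tauto
    · tauto
    · exact Or.inr ⟨rfl, hne⟩
    · exact Or.inr ⟨Sym2.eq_swap, hne.symm⟩

lemma glue_sup_closedB {x y : Fin d} (hx : x ∈ B) (hxy : (T₁ ⊔ T₂).Adj x y) : y ∈ B := by
  rcases hxy with h | h
  · exact (h₁.1 h).2
  · exact absurd ((h₂.1 h).1) (fun hmem => (mem_sdiff.mp hmem).2 hx)

lemma glue_adj_vm : (glue T₁ T₂ v m).Adj v m :=
  (glue_adj hmB hvB h₁ h₂).mpr (Or.inr (Or.inr (Or.inl ⟨rfl, rfl⟩)))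

lemma glue_sup_acyclic : (T₁ ⊔ T₂).IsAcyclic := by
  intro a c hc
  cases c with
  | nil => exact hc.not_of_nil
  | @cons _ c₀ _ h q =>
    rcases (sup_adj _ _ _ _).mp h with h' | h'
    · have ha : a ∈ B := (h₁.1 h').1
      have hcl : ∀ ⦃x y⦄, x ∈ B → (T₁ ⊔ T₂).Adj x y → y ∈ B :=
        fun x y hx hxy => glue_sup_closedB hmB hvB h₁ h₂ hx hxy
      have hedge : ∀ ⦃x y⦄, x ∈ B → y ∈ B → (T₁ ⊔ T₂).Adj x y → T₁.Adj x y := by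
        intro x y hx hy hxy
        rcases hxy with h'' | h''
        · exact h''
        · exact absurd ((h₂.1 h'').1) (fun hmem => (mem_sdiff.mp hmem).2 hx)
      have := walk_closed hcl hedge (Walk.cons h q) ha
      exact h₁.2.2 (((Walk.cons h q)).transfer T₁ this.2) (hc.transfer _)
    · have ha : a ∈ s \ B := (h₂.1 h').1
      have hcl : ∀ ⦃x y⦄, x ∈ s \ B → (T₁ ⊔ T₂).Adj x y → y ∈ s \ B := by
        intro x y hx hxy
        rcases hxy with h'' | h''
        · exact absurd ((h₁.1 h'').1) (mem_sdiff.mp hx).2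
        · exact (h₂.1 h'').2
      have hedge : ∀ ⦃x y⦄, x ∈ s \ B → y ∈ s \ B → (T₁ ⊔ T₂).Adj x y → T₂.Adj x y := by
        intro x y hx hy hxy
        rcases hxy with h'' | h''
        · exact absurd ((h₁.1 h'').1) (mem_sdiff.mp hx).2
        · exact h''
      have := walk_closed hcl hedge (Walk.cons h q) ha
      exact h₂.2.2 (((Walk.cons h q)).transfer T₂ this.2) (hc.transfer _)

lemma glue_deleteEdges : (glue T₁ T₂ v m).deleteEdges {s(v, m)} = T₁ ⊔ T₂ := by
  have hne := glue_vne hmB hvB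
  ext a b
  rw [SimpleGraph.deleteEdges_adj, glue_adj hmB hvB h₁ h₂, Set.mem_singleton_iff]
  constructor
  · rintro ⟨h | h | ⟨rfl, rfl⟩ | ⟨rfl, rfl⟩, hne'⟩
    · exact Or.inl h
    · exact Or.inr h
    · exact absurd rfl hne'
    · exact absurd Sym2.eq_swap hne'
  · rintro (h | h)
    · refine ⟨Or.inl h, ?_⟩
      rw [Sym2.eq_iff]
      rintro (⟨rfl, rfl⟩ | ⟨rfl, rfl⟩)
      · exact hmB (h₁.1 h).2
      · exact hmB (h₁.1 h).1
    · refine ⟨Or.inr (Or.inl h), ?_⟩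
      rw [Sym2.eq_iff]
      rintro (⟨rfl, rfl⟩ | ⟨rfl, rfl⟩)
      · exact (mem_sdiff.mp (h₂.1 h).1).2 hvB
      · exact (mem_sdiff.mp (h₂.1 h).2).2 hvB

lemma glue_acyclic : (glue T₁ T₂ v m).IsAcyclic := by
  intro a c hc
  by_cases hmem : s(v, m) ∈ c.edges
  · have hbridge : (glue T₁ T₂ v m).IsBridge s(v, m) := by
      rw [isBridge_iff]
      intro hr
      have hle : ((glue T₁ T₂ v m) \ fromEdgeSet {s(v, m)}) ≤ T₁ ⊔ T₂ := by
        intro x y hxy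
        rw [sdiff_adj] at hxy
        have := (glue_adj hmB hvB h₁ h₂).mp hxy.1
        rcases this with h | h | ⟨rfl, rfl⟩ | ⟨rfl, rfl⟩
        · exact Or.inl h
        · exact Or.inr h
        · exact absurd (by rw [fromEdgeSet_adj]; exact ⟨rfl, hxy.1.ne⟩) hxy.2
        · exact absurd (by rw [fromEdgeSet_adj]; exact ⟨Sym2.eq_swap, hxy.1.ne⟩) hxy.2
      have hr2 : (T₁ ⊔ T₂).Reachable v m := hr.mono hle
      have : m ∈ B := mem_of_reach_closed
        (fun x y hx hxy => glue_sup_closedB hmB hvB h₁ h₂ hx hxy) hr2 hvB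
      exact hmB this
    rw [isBridge_iff_adj_and_forall_cycle_notMem (c.edges_subset_edgeSet hmem)] at hbridge
    exact hbridge c hc hmem
  · have hsub : ∀ e ∈ c.edges, e ∈ (T₁ ⊔ T₂).edgeSet := by
      intro e he
      have h1 : e ∈ (glue T₁ T₂ v m).edgeSet := c.edges_subset_edgeSet he
      rw [glue, edgeSet_sup, edgeSet_sup] at h1
      rcases h1 with (h1 | h1) | h1
      · rw [edgeSet_sup]; exact Or.inl h1
      · rw [edgeSet_sup]; exact Or.inr h1
      · rw [edgeSet_fromEdgeSet] at h1
        exact absurd (h1.1 ▸ hmem) (by simpa using h1.1 ▸ he)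
    exact glue_sup_acyclic hmB hvB h₁ h₂ (c.transfer _ hsub) (hc.transfer _)

include hBs hm in
lemma glue_tree : IsTreeOn s (glue T₁ T₂ v m) := by
  have hvs : v ∈ s := hBs hvB
  refine ⟨?_, ?_, glue_acyclic hmB hvB h₁ h₂⟩
  · intro a b hab
    rcases (glue_adj hmB hvB h₁ h₂).mp hab with h | h | ⟨rfl, rfl⟩ | ⟨rfl, rfl⟩
    · exact ⟨hBs (h₁.1 h).1, hBs (h₁.1 h).2⟩
    · exact ⟨(mem_sdiff.mp (h₂.1 h).1).1, (mem_sdiff.mp (h₂.1 h).2).1⟩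
    · exact ⟨hvs, hm⟩
    · exact ⟨hm, hvs⟩
  · have hT₁le : T₁ ≤ glue T₁ T₂ v m := le_trans le_sup_left le_sup_left
    have hT₂le : T₂ ≤ glue T₁ T₂ v m := le_trans le_sup_right le_sup_left
    have key : ∀ a ∈ s, (glue T₁ T₂ v m).Reachable a v := by
      intro a ha
      by_cases haB : a ∈ B
      · exact (h₁.2.1 a haB v hvB).mono hT₁le
      · have : a ∈ s \ B := mem_sdiff.mpr ⟨ha, haB⟩
        have h2 : (glue T₁ T₂ v m).Reachable a m :=
          (h₂.2.1 a this m (mem_sdiff.mpr ⟨hm, hmB⟩)).mono hT₂le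
        exact h2.trans (glue_adj_vm hmB hvB h₁ h₂).symm.reachable
    intro a ha b hb
    exact (key a ha).trans (key b hb).symm

lemma splitB_glue : splitB (glue T₁ T₂ v m) v m = B := by
  ext x
  rw [mem_splitB, glue_deleteEdges hmB hvB h₁ h₂]
  constructor
  · intro h
    exact mem_of_reach_closed (fun x y hx hxy => glue_sup_closedB hmB hvB h₁ h₂ hx hxy) h hvB
  · intro hx
    exact (h₁.2.1 v hvB x hx).mono le_sup_left

lemma part1_glue : part1 (glue T₁ T₂ v m) v m = T₁ := by
  rw [part1, glue_deleteEdges hmB hvB h₁ h₂, splitB_glue hmB hvB h₁ h₂]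
  ext a b
  rw [inf_adj, sup_adj, cliqueOn_adj]
  constructor
  · rintro ⟨h | h, _, haB, hbB⟩
    · exact h
    · exact absurd ((h₂.1 h).1) (fun hmem => (mem_sdiff.mp hmem).2 haB)
  · intro h
    exact ⟨Or.inl h, h.ne, (h₁.1 h).1, (h₁.1 h).2⟩

lemma part2_glue : part2 s (glue T₁ T₂ v m) v m = T₂ := by
  rw [part2, glue_deleteEdges hmB hvB h₁ h₂, splitB_glue hmB hvB h₁ h₂]
  ext a b
  rw [inf_adj, sup_adj, cliqueOn_adj]
  constructor
  · rintro ⟨h | h, _, haB, hbB⟩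
    · exact absurd ((h₁.1 h).1) (mem_sdiff.mp haB).2
    · exact h
  · intro h
    exact ⟨Or.inr h, h.ne, (h₂.1 h).1, (h₂.1 h).2⟩

end GlueLemmas

section SplitWeights

variable {s : Finset (Fin d)} {m : Fin d} {T : SimpleGraph (Fin d)} {v : Fin d}
variable (hT : IsTreeOn s T) (hv : T.Adj v m) (hmax : ∀ x ∈ s, x ≤ m)

include hT hv

include hmax in
lemma split_v_lt : v < m :=
  lt_of_le_of_ne (hmax _ (hT.1 hv).1) hv.ne

include hmax in
lemma indeg_part1 {j : Fin d} (hj : j ∈ splitB T v m) :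
    indeg T j = indeg (part1 T v m) j := by
  rw [indeg_eq_card, indeg_eq_card]
  congr 1
  apply Finset.filter_congr
  intro i _
  constructor
  · rintro ⟨hij, hadj⟩
    refine ⟨hij, ?_⟩
    rcases (adj_dichotomy hT hv).mp hadj with h | h | ⟨rfl, rfl⟩ | ⟨rfl, rfl⟩
    · exact h
    · exact absurd (h.2.2.2) (fun hc => (mem_sdiff.mp hc).2 hj)
    · exact absurd hj (m_not_mem_splitB hT hv)
    · exact absurd hij (not_lt.mpr (le_of_lt (lt_of_le_of_ne (hmax _ (splitB_subset hT hv hj)) (fun h => (m_not_mem_splitB hT hv) (h ▸ hj)))))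
  · rintro ⟨hij, hadj⟩
    exact ⟨hij, SimpleGraph.deleteEdges_le _ hadj.1⟩

lemma indeg_part2_zero {j : Fin d} (hj : j ∈ splitB T v m) :
    indeg (part2 s T v m) j = 0 :=
  indeg_eq_zero (fun i hadj => (mem_sdiff.mp hadj.2.2.2).2 hj)

lemma indeg_part2 {j : Fin d} (hj : j ∈ s \ splitB T v m) (hjm : j ≠ m) :
    indeg T j = indeg (part2 s T v m) j := by
  rw [indeg_eq_card, indeg_eq_card]
  congr 1
  apply Finset.filter_congr
  intro i _
  constructor
  · rintro ⟨hij, hadj⟩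
    refine ⟨hij, ?_⟩
    rcases (adj_dichotomy hT hv).mp hadj with h | h | ⟨rfl, rfl⟩ | ⟨rfl, rfl⟩
    · exact absurd (h.2.2.2) (mem_sdiff.mp hj).2
    · exact h
    · exact absurd rfl hjm
    · exact absurd (mem_sdiff.mp hj).2 (not_not.mpr v_mem_splitB)
  · rintro ⟨hij, hadj⟩
    exact ⟨hij, SimpleGraph.deleteEdges_le _ hadj.1⟩

lemma indeg_part1_zero {j : Fin d} (hj : j ∉ splitB T v m) :
    indeg (part1 T v m) j = 0 :=
  indeg_eq_zero (fun i hadj => hj hadj.2.2.2)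

omit hv in
lemma indeg_outside {j : Fin d} (hj : j ∉ s) : indeg T j = 0 :=
  indeg_eq_zero (fun i hadj => hj (hT.1 hadj).2)

lemma indeg_part2_outside {j : Fin d} (hj : j ∉ s) : indeg (part2 s T v m) j = 0 :=
  indeg_eq_zero (fun i hadj => hj (mem_sdiff.mp hadj.2.2.2).1)

include hmax in
lemma indeg_at_max : indeg T m = indeg (part2 s T v m) m + 1 := by
  rw [indeg_eq_card, indeg_eq_card]
  have hveq : univ.filter (fun i => i < m ∧ T.Adj i m) =
      insert v (univ.filter (fun i => i < m ∧ (part2 s T v m).Adj i m)) := by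
    ext i
    simp only [Finset.mem_insert, Finset.mem_filter, Finset.mem_univ, true_and]
    constructor
    · rintro ⟨hij, hadj⟩
      rcases (adj_dichotomy hT hv).mp hadj with h | h | ⟨rfl, -⟩ | ⟨heq, -⟩
      · exact absurd (h.2.2.2) (m_not_mem_splitB hT hv)
      · exact Or.inr ⟨hij, h⟩
      · exact Or.inl rfl
      · exact absurd hij (heq ▸ lt_irrefl _)
    · rintro (rfl | ⟨hij, hadj⟩)
      · exact ⟨split_v_lt hT hv hmax, hv⟩
      · exact ⟨hij, SimpleGraph.deleteEdges_le _ hadj.1⟩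
  rw [hveq, Finset.card_insert_of_notMem]
  intro hc
  rw [Finset.mem_filter] at hc
  exact (mem_sdiff.mp hc.2.2.2.2.1).2 v_mem_splitB

lemma indeg_part1_at_max : indeg (part1 T v m) m = 0 :=
  indeg_part1_zero hT hv (m_not_mem_splitB hT hv)

include hmax in
lemma weight_split :
    (indeg T m - 1).factorial * ∏ j ∈ univ.erase m, (indeg T j).factorial =
      graphWeight (part1 T v m) * graphWeight (part2 s T v m) := by
  have h1 : graphWeight (part1 T v m) = ∏ j ∈ univ.erase m, (indeg (part1 T v m) j).factorial := by
    rw [graphWeight, ← Finset.mul_prod_erase univ _ (mem_univ m), indeg_part1_at_max hT hv]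
    simp
  have h2 : graphWeight (part2 s T v m) =
      (indeg T m - 1).factorial * ∏ j ∈ univ.erase m, (indeg (part2 s T v m) j).factorial := by
    rw [graphWeight, ← Finset.mul_prod_erase univ _ (mem_univ m), indeg_at_max hT hv hmax]
    simp
  rw [h1, h2]
  rw [mul_left_comm, ← Finset.prod_mul_distrib]
  congr 1
  apply Finset.prod_congr rfl
  intro j hj
  have hjm : j ≠ m := (Finset.mem_erase.mp hj).1
  by_cases hjB : j ∈ splitB T v m
  · rw [← indeg_part1 hT hv hmax hjB, indeg_part2_zero hT hv hjB]
    simp [Nat.factorial]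
  · by_cases hjs : j ∈ s
    · rw [← indeg_part2 hT hv (mem_sdiff.mpr ⟨hjs, hjB⟩) hjm, indeg_part1_zero hT hv hjB]
      simp [Nat.factorial]
    · rw [indeg_outside hT hjs, indeg_part1_zero hT hv hjB, indeg_part2_outside hT hv hjs]
      simp

end SplitWeights



/-! ### Counting -/

noncomputable def treeSum (s : Finset (Fin d)) : ℕ :=
  ∑ G ∈ univ.filter (IsTreeOn s), graphWeight G

lemma isTreeOn_singleton {x : Fin d} {G : SimpleGraph (Fin d)} :
    IsTreeOn {x} G ↔ G = ⊥ := by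
  constructor
  · intro h
    ext a b
    simp only [bot_adj, iff_false]
    intro hab
    have h1 := (h.1 hab).1
    have h2 := (h.1 hab).2
    rw [Finset.mem_singleton] at h1 h2
    exact hab.ne (h1.trans h2.symm)
  · rintro rfl
    refine ⟨fun a b hab => absurd hab (by simp), ?_, isAcyclic_bot⟩
    intro a ha b hb
    rw [Finset.mem_singleton] at ha hb
    exact ha ▸ hb ▸ Reachable.refl _

@[simp] lemma graphWeight_bot : graphWeight (⊥ : SimpleGraph (Fin d)) = 1 := by
  rw [graphWeight]
  apply Finset.prod_eq_one
  intro j _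
  rw [indeg_eq_zero (fun i h => h), Nat.factorial_zero]

lemma treeSum_singleton (x : Fin d) : treeSum {x} = 1 := by
  rw [treeSum, show univ.filter (IsTreeOn {x}) = {(⊥ : SimpleGraph (Fin d))} by
    ext G; simp [isTreeOn_singleton]]
  simp

section Recurrence

variable {s : Finset (Fin d)} {m : Fin d}

lemma indeg_max_eq {T : SimpleGraph (Fin d)} (hT : IsTreeOn s T) (hmax : ∀ x ∈ s, x ≤ m) :
    indeg T m = (univ.filter fun i => T.Adj i m).card := by
  rw [indeg_eq_card]
  congr 1
  apply Finset.filter_congr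
  intro i _
  simp only [and_iff_right_iff_imp]
  intro h
  exact lt_of_le_of_ne (hmax _ (hT.1 h).1) h.ne

lemma indeg_max_pos {T : SimpleGraph (Fin d)} (hT : IsTreeOn s T) (hm : m ∈ s)
    (hs : 2 ≤ s.card) (hmax : ∀ x ∈ s, x ≤ m) : 0 < indeg T m := by
  rw [indeg_max_eq hT hmax, Finset.card_pos]
  have hne : (s.erase m).Nonempty := by
    rw [← Finset.card_pos, Finset.card_erase_of_mem hm]
    omega
  obtain ⟨a, ha⟩ := hne
  obtain ⟨p⟩ := hT.2.1 m hm a (Finset.mem_of_mem_erase ha)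
  cases p with
  | nil => exact absurd rfl (Finset.ne_of_mem_erase ha).symm
  | cons h q => exact ⟨_, Finset.mem_filter.mpr ⟨Finset.mem_univ _, h.symm⟩⟩

theorem treeSum_rec (hs : 2 ≤ s.card) (hm : m ∈ s) (hmax : ∀ x ∈ s, x ≤ m) :
    treeSum s = ∑ B ∈ (s.erase m).powerset, B.card * (treeSum B * treeSum (s \ B)) := by
  classical
  have step1 : treeSum s = ∑ G ∈ univ.filter (IsTreeOn s), ∑ v ∈ univ.filter (fun v => G.Adj v m),
      ((indeg G m - 1).factorial * ∏ j ∈ univ.erase m, (indeg G j).factorial) := by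
    apply Finset.sum_congr rfl
    intro G hG
    rw [Finset.mem_filter] at hG
    have hT := hG.2
    rw [Finset.sum_const, smul_eq_mul, ← indeg_max_eq hT hmax]
    rw [graphWeight, ← Finset.mul_prod_erase univ _ (mem_univ m)]
    rw [← Nat.mul_factorial_pred (indeg_max_pos hT hm hs hmax).ne', mul_assoc]
  have step2 : ∀ B ∈ (s.erase m).powerset, B.card * (treeSum B * treeSum (s \ B)) =
      ∑ v ∈ B, ∑ q ∈ (univ.filter (IsTreeOn B)) ×ˢ (univ.filter (IsTreeOn (s \ B))),
        graphWeight q.1 * graphWeight q.2 := by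
    intro B _
    symm
    calc ∑ v ∈ B, ∑ q ∈ (univ.filter (IsTreeOn B)) ×ˢ (univ.filter (IsTreeOn (s \ B))),
          graphWeight q.1 * graphWeight q.2
        = ∑ _v ∈ B, (treeSum B * treeSum (s \ B)) := by
          refine Finset.sum_congr rfl fun v _ => ?_
          rw [Finset.sum_product, treeSum, treeSum, Finset.sum_mul_sum]
      _ = B.card * (treeSum B * treeSum (s \ B)) := by rw [Finset.sum_const, smul_eq_mul]
  calc treeSum s
      = ∑ G ∈ univ.filter (IsTreeOn s), ∑ v ∈ univ.filter (fun v => G.Adj v m),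
          ((indeg G m - 1).factorial * ∏ j ∈ univ.erase m, (indeg G j).factorial) := step1
    _ = ∑ p ∈ (univ.filter (IsTreeOn s)).sigma (fun G => univ.filter (fun v => G.Adj v m)),
          ((indeg p.1 m - 1).factorial * ∏ j ∈ univ.erase m, (indeg p.1 j).factorial) :=
        Finset.sum_sigma' _ _ _
    _ = ∑ q ∈ ((s.erase m).powerset).sigma (fun B => B.sigma (fun _ =>
          (univ.filter (IsTreeOn B)) ×ˢ (univ.filter (IsTreeOn (s \ B))))),
          graphWeight q.2.2.1 * graphWeight q.2.2.2 := by
        refine Finset.sum_nbij'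
          (fun p => ⟨splitB p.1 p.2 m, p.2, (part1 p.1 p.2 m, part2 s p.1 p.2 m)⟩)
          (fun q => ⟨glue q.2.2.1 q.2.2.2 q.2.1 m, q.2.1⟩) ?_ ?_ ?_ ?_ ?_
        · rintro ⟨T, v⟩ hp
          rw [Finset.mem_sigma, Finset.mem_filter, Finset.mem_filter] at hp
          obtain ⟨⟨-, hT⟩, -, hv⟩ := hp
          rw [Finset.mem_sigma, Finset.mem_sigma]
          refine ⟨?_, ?_, ?_⟩
          · rw [Finset.mem_powerset]
            intro x hx
            exact Finset.mem_erase.mpr ⟨fun h => (m_not_mem_splitB hT hv) (h ▸ hx),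
              splitB_subset hT hv hx⟩
          · exact v_mem_splitB
          · rw [Finset.mem_product, Finset.mem_filter, Finset.mem_filter]
            exact ⟨⟨mem_univ _, part1_tree hT hv⟩, mem_univ _, part2_tree hT hv hmax⟩
        · rintro ⟨B, v, T₁, T₂⟩ hq
          rw [Finset.mem_sigma, Finset.mem_sigma, Finset.mem_powerset, Finset.mem_product,
            Finset.mem_filter, Finset.mem_filter] at hq
          obtain ⟨hBsub, hvB, ⟨-, h₁⟩, -, h₂⟩ := hq
          have hmB : m ∉ B := fun h => Finset.notMem_erase m s (hBsub h)
          have hBs : B ⊆ s := hBsub.trans (Finset.erase_subset m s)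
          rw [Finset.mem_sigma, Finset.mem_filter, Finset.mem_filter]
          exact ⟨⟨mem_univ _, glue_tree hBs hmB hvB hm h₁ h₂⟩, mem_univ _,
            glue_adj_vm hmB hvB h₁ h₂⟩
        · rintro ⟨T, v⟩ hp
          rw [Finset.mem_sigma, Finset.mem_filter, Finset.mem_filter] at hp
          obtain ⟨⟨-, hT⟩, -, hv⟩ := hp
          simp only [glue_split hT hv]
        · rintro ⟨B, v, T₁, T₂⟩ hq
          rw [Finset.mem_sigma, Finset.mem_sigma, Finset.mem_powerset, Finset.mem_product,
            Finset.mem_filter, Finset.mem_filter] at hq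
          obtain ⟨hBsub, hvB, ⟨-, h₁⟩, -, h₂⟩ := hq
          have hmB : m ∉ B := fun h => Finset.notMem_erase m s (hBsub h)
          simp only [splitB_glue hmB hvB h₁ h₂, part1_glue hmB hvB h₁ h₂,
            part2_glue hmB hvB h₁ h₂]
        · rintro ⟨T, v⟩ hp
          rw [Finset.mem_sigma, Finset.mem_filter, Finset.mem_filter] at hp
          obtain ⟨⟨-, hT⟩, -, hv⟩ := hp
          exact weight_split hT hv hmax
    _ = ∑ B ∈ (s.erase m).powerset, ∑ p ∈ B.sigma (fun _ =>
          (univ.filter (IsTreeOn B)) ×ˢ (univ.filter (IsTreeOn (s \ B)))),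
          graphWeight p.2.1 * graphWeight p.2.2 := Finset.sum_sigma _ _ _
    _ = ∑ B ∈ (s.erase m).powerset, ∑ v ∈ B,
          ∑ q ∈ (univ.filter (IsTreeOn B)) ×ˢ (univ.filter (IsTreeOn (s \ B))),
          graphWeight q.1 * graphWeight q.2 :=
        Finset.sum_congr rfl (fun B _ => Finset.sum_sigma _ _ _)
    _ = ∑ B ∈ (s.erase m).powerset, B.card * (treeSum B * treeSum (s \ B)) :=
        (Finset.sum_congr rfl step2).symm

end Recurrence

theorem treeSum_formula : ∀ n (s : Finset (Fin d)), s.Nonempty → s.card = n →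
    treeSum s = catalan (n - 1) * (n - 1).factorial := by
  intro n
  induction n using Nat.strong_induction_on with
  | _ n ih =>
    intro s hne hcard
    have hn1 : 1 ≤ n := hcard ▸ Finset.card_pos.mpr hne
    rcases eq_or_lt_of_le hn1 with h1 | h2
    · obtain ⟨x, rfl⟩ := Finset.card_eq_one.mp (hcard.trans h1.symm)
      rw [treeSum_singleton, ← h1]
      simp
    · have hs2 : 2 ≤ s.card := by omega
      have hm : s.max' hne ∈ s := s.max'_mem hne
      have hmax : ∀ x ∈ s, x ≤ s.max' hne := fun x hx => s.le_max' x hx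
      set m := s.max' hne
      rw [treeSum_rec hs2 hm hmax]
      have hcard_t : (s.erase m).card = n - 1 := by
        rw [Finset.card_erase_of_mem hm, hcard]
      have hterm : ∀ B ∈ (s.erase m).powerset, B.card * (treeSum B * treeSum (s \ B)) =
          B.card * ((catalan (B.card - 1) * (B.card - 1).factorial) *
            (catalan (n - B.card - 1) * (n - B.card - 1).factorial)) := by
        intro B hB
        rw [Finset.mem_powerset] at hB
        rcases Finset.eq_empty_or_nonempty B with rfl | hBne
        · simp
        · have hBs : B ⊆ s := hB.trans (Finset.erase_subset m s)
          have hBcard : B.card ≤ n - 1 := hcard_t ▸ Finset.card_le_card hB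
          have hBpos : 1 ≤ B.card := Finset.card_pos.mpr hBne
          have hsB : (s \ B).card = n - B.card := by
            rw [Finset.card_sdiff_of_subset hBs, hcard]
          have hsBne : (s \ B).Nonempty := ⟨m, Finset.mem_sdiff.mpr ⟨hm,
            fun h => Finset.notMem_erase m s (hB h)⟩⟩
          rw [ih B.card (by omega) B hBne rfl, ih (n - B.card) (by omega) (s \ B) hsBne hsB]
      rw [Finset.sum_congr rfl hterm]
      rw [Finset.sum_powerset_apply_card (fun k => k * ((catalan (k - 1) * (k - 1).factorial) *
            (catalan (n - k - 1) * (n - k - 1).factorial)))]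
      rw [hcard_t]
      set N := n - 1 with hN_def
      have hNpos : 1 ≤ N := by omega
      have hNk : ∀ k : ℕ, n - k - 1 = N - k := fun k => by omega
      simp only [hNk]
      rw [Finset.sum_range_succ']
      have hstep : ∀ i ∈ Finset.range N, N.choose (i + 1) • ((i + 1) *
          ((catalan (i + 1 - 1) * (i + 1 - 1).factorial) *
            (catalan (N - (i + 1)) * (N - (i + 1)).factorial))) =
          N.factorial * (catalan i * catalan (N - 1 - i)) := by
        intro i hi
        rw [Finset.mem_range] at hi
        have hch : N.choose (i + 1) * (i + 1).factorial * (N - (i + 1)).factorial =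
            N.factorial := Nat.choose_mul_factorial_mul_factorial (by omega)
        rw [smul_eq_mul, Nat.add_sub_cancel, show N - (i + 1) = N - 1 - i by omega]
        calc N.choose (i + 1) * ((i + 1) *
              ((catalan i * i.factorial) * (catalan (N - 1 - i) * (N - 1 - i).factorial)))
            = (N.choose (i + 1) * ((i + 1) * i.factorial) * (N - 1 - i).factorial) *
              (catalan i * catalan (N - 1 - i)) := by ring
          _ = N.factorial * (catalan i * catalan (N - 1 - i)) := by
              rw [← Nat.factorial_succ, show N - 1 - i = N - (i + 1) by omega, hch]
      rw [Finset.sum_congr rfl hstep]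
      have hzero : N.choose 0 • ((0 : ℕ) * ((catalan (0 - 1) * (0 - 1).factorial) *
          (catalan (N - 0) * (N - 0).factorial))) = 0 := by simp
      rw [hzero, add_zero, ← Finset.mul_sum]
      have hcat : catalan N = ∑ i ∈ Finset.range N, catalan i * catalan (N - 1 - i) := by
        conv_lhs => rw [show N = N - 1 + 1 by omega]
        rw [catalan_succ, Fin.sum_univ_eq_sum_range (fun i => catalan i * catalan (N - 1 - i))]
        rw [show (N - 1).succ = N by omega]
      rw [← hcat, Nat.mul_comm]

end WSTC

theorem weighted_spanning_tree_count (d : ℕ) (hd : 2 ≤ d) :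
    (2 * d - 1) * ∑ᶠ G ∈ {G : SimpleGraph (Fin d) | G.IsTree}, graphWeight G =
      Nat.choose (2 * d - 1) (d - 1) * (d - 1).factorial := by
  classical
  have hnonempty : Nonempty (Fin d) := ⟨⟨0, by omega⟩⟩
  have hset : {G : SimpleGraph (Fin d) | G.IsTree} =
      ↑(Finset.univ.filter (WSTC.IsTreeOn (Finset.univ : Finset (Fin d)))) := by
    ext G
    simp only [Set.mem_setOf_eq, Finset.coe_filter, Finset.mem_univ, true_and]
    constructor
    · intro h
      exact ⟨fun a b _ => ⟨Finset.mem_univ a, Finset.mem_univ b⟩,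
        fun a _ b _ => h.isConnected.preconnected a b, h.IsAcyclic⟩
    · intro h
      exact ⟨(SimpleGraph.connected_iff G).mpr
        ⟨fun a b => h.2.1 a (Finset.mem_univ a) b (Finset.mem_univ b), hnonempty⟩, h.2.2⟩
  rw [hset, finsum_mem_coe_finset]
  have h1 : ∑ G ∈ Finset.univ.filter (WSTC.IsTreeOn (Finset.univ : Finset (Fin d))),
      graphWeight G = WSTC.treeSum Finset.univ := rfl
  have hcard : (Finset.univ : Finset (Fin d)).card = d := by
    rw [Finset.card_univ, Fintype.card_fin]
  rw [h1, WSTC.treeSum_formula d Finset.univ Finset.univ_nonempty hcard]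
  -- arithmetic: (2d-1) * (catalan (d-1) * (d-1)!) = C(2d-1, d-1) * (d-1)!
  suffices h : (2 * d - 1) * catalan (d - 1) = (2 * d - 1).choose (d - 1) by
    rw [← Nat.mul_assoc, h]
  obtain ⟨N, rfl⟩ : ∃ N, d = N + 1 := ⟨d - 1, by omega⟩
  have e1 : 2 * (N + 1) - 1 = 2 * N + 1 := by omega
  have e2 : N + 1 - 1 = N := by omega
  rw [e1, e2]
  have key : (2 * N + 1) * catalan N * (N + 1) = (2 * N + 1).choose N * (N + 1) := by
    have hc : (N + 1) * catalan N = Nat.centralBinom N := succ_mul_catalan_eq_centralBinom N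
    have hcb : Nat.centralBinom N = (2 * N).choose N := rfl
    have hs : (2 * N).succ * (2 * N).choose N = (2 * N).succ.choose N.succ * N.succ :=
      Nat.add_one_mul_choose_eq (2 * N) N
    have hsymm : (2 * N + 1).choose (N + 1) = (2 * N + 1).choose N := by
      have := Nat.choose_symm (n := 2 * N + 1) (k := N) (by omega)
      rw [show 2 * N + 1 - N = N + 1 by omega] at this
      exact this
    calc (2 * N + 1) * catalan N * (N + 1) = (2 * N + 1) * ((N + 1) * catalan N) := by ring
      _ = (2 * N + 1) * (2 * N).choose N := by rw [hc, hcb]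
      _ = (2 * N + 1).choose (N + 1) * (N + 1) := hs
      _ = (2 * N + 1).choose N * (N + 1) := by rw [hsymm]
  exact Nat.eq_of_mul_eq_mul_right (by omega) key
end

section
/- Let a ≥ 2 be an integer, and define the real constants S₁ = 256a¹⁰ − 1024a⁹ + 1280a⁸ − 1280a⁶ + 1024a⁵ − 256a⁴, S₂ = 384a¹⁰ + 384a⁹ + 768a⁸ − 13824a⁷ + 26496a⁶ − 18048a⁵ + 3072a⁴ + 768a³, and S₃ = 64a¹⁰ − 192a⁹ + 1024a⁸ − 2944a⁷ + 3136a⁶ − 448a⁵ − 1152a⁴ + 512a³. Then S₁ > 0, and the function f(d) = (6S₁d + S₂)/(S₁d + S₃) − 6 − 12/(2ad+1) − 3/(a(a+1)d) is O(1/d²) as the real variable d → ∞; that is, there exist constants C > 0 and d₀ such that |f(d)| ≤ C/d² for all d ≥ d₀. -/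
set_option maxHeartbeats 2000000 in
theorem virtual_slope_asymptotics (a : ℤ) (ha : 2 ≤ a) (S₁ S₂ S₃ : ℝ)
    (hS₁ : S₁ = 256 * (a : ℝ) ^ 10 - 1024 * (a : ℝ) ^ 9 + 1280 * (a : ℝ) ^ 8
      - 1280 * (a : ℝ) ^ 6 + 1024 * (a : ℝ) ^ 5 - 256 * (a : ℝ) ^ 4)
    (hS₂ : S₂ = 384 * (a : ℝ) ^ 10 + 384 * (a : ℝ) ^ 9 + 768 * (a : ℝ) ^ 8
      - 13824 * (a : ℝ) ^ 7 + 26496 * (a : ℝ) ^ 6 - 18048 * (a : ℝ) ^ 5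
      + 3072 * (a : ℝ) ^ 4 + 768 * (a : ℝ) ^ 3)
    (hS₃ : S₃ = 64 * (a : ℝ) ^ 10 - 192 * (a : ℝ) ^ 9 + 1024 * (a : ℝ) ^ 8
      - 2944 * (a : ℝ) ^ 7 + 3136 * (a : ℝ) ^ 6 - 448 * (a : ℝ) ^ 5
      - 1152 * (a : ℝ) ^ 4 + 512 * (a : ℝ) ^ 3) :
    0 < S₁ ∧
    ∃ C > (0 : ℝ), ∃ d₀ : ℝ, ∀ d : ℝ, d₀ ≤ d →
      |(6 * S₁ * d + S₂) / (S₁ * d + S₃) - 6 - 12 / (2 * (a : ℝ) * d + 1)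
          - 3 / ((a : ℝ) * ((a : ℝ) + 1) * d)| ≤ C / d ^ 2 := by
  have hA : (2:ℝ) ≤ (a:ℝ) := by exact_mod_cast ha
  set A : ℝ := (a:ℝ) with hAdef
  have hA0 : 0 < A := by linarith
  have hA1 : 0 < A - 1 := by linarith
  have hS₁pos : 0 < S₁ := by
    have h : S₁ = 256 * A ^ 4 * (A - 1) ^ 5 * (A + 1) := by rw [hS₁]; ring
    rw [h]
    exact mul_pos (mul_pos (by positivity) (pow_pos hA1 5)) (by linarith)
  refine ⟨hS₁pos, 2 * |(S₂ - 6 * S₃) * S₃| / S₁ ^ 2 + 6, by positivity,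
    max 1 (2 * |S₃| / S₁), ?_⟩
  intro d hd
  have hd1 : (1:ℝ) ≤ d := le_trans (le_max_left _ _) hd
  have hd0 : 0 < d := by linarith
  have hd2 : 2 * |S₃| ≤ S₁ * d := by
    have := le_trans (le_max_right (1:ℝ) (2 * |S₃| / S₁)) hd
    calc 2 * |S₃| = 2 * |S₃| / S₁ * S₁ := by field_simp
    _ ≤ d * S₁ := by exact mul_le_mul_of_nonneg_right this hS₁pos.le
    _ = S₁ * d := by ring
  have habs : -|S₃| ≤ S₃ := neg_abs_le S₃
  have hden : S₁ * d / 2 ≤ S₁ * d + S₃ := by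
    have : 0 ≤ |S₃| := abs_nonneg _
    linarith
  have hdenpos : 0 < S₁ * d + S₃ := lt_of_lt_of_le (by positivity) hden
  have h2ad : 0 < 2 * A * d + 1 := by nlinarith
  have key : (6 * S₁ * d + S₂) / (S₁ * d + S₃) - 6 - 12 / (2 * A * d + 1)
      - 3 / (A * (A + 1) * d)
      = -((S₂ - 6 * S₃) * S₃) / (S₁ * d * (S₁ * d + S₃)) + 6 / (A * d * (2 * A * d + 1)) := by
    have h1 : S₁ * d + S₃ ≠ 0 := hdenpos.ne'
    have h2 : (2 * A * d + 1) ≠ 0 := h2ad.ne'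
    have h3 : A ≠ 0 := hA0.ne'
    have h4 : A + 1 ≠ 0 := by positivity
    have h5 : d ≠ 0 := hd0.ne'
    have h6 : S₁ ≠ 0 := hS₁pos.ne'
    have h7 : S₁ * d ≠ 0 := mul_ne_zero h6 h5
    have hrel : A * (A + 1) * (S₂ - 6 * S₃) = S₁ * (6 * A + 9) := by
      rw [hS₁, hS₂, hS₃]; ring
    have k1 : (6 * S₁ * d + S₂) / (S₁ * d + S₃) - 6 = (S₂ - 6 * S₃) / (S₁ * d + S₃) := by
      field_simp
      ring
    have k2 : (S₂ - 6 * S₃) / (S₁ * d + S₃)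
        = (S₂ - 6 * S₃) / (S₁ * d) - (S₂ - 6 * S₃) * S₃ / (S₁ * d * (S₁ * d + S₃)) := by
      field_simp
      ring
    have k3 : (S₂ - 6 * S₃) / (S₁ * d) = 6 / (A * d) + 3 / (A * (A + 1) * d) := by
      have hS2 : S₂ - 6 * S₃ = S₁ * (6 * A + 9) / (A * (A + 1)) := by
        rw [eq_div_iff (mul_ne_zero h3 h4)]
        linear_combination hrel
      rw [hS2]
      field_simp
      ring
    have k4 : 12 / (2 * A * d + 1) = 6 / (A * d) - 6 / (A * d * (2 * A * d + 1)) := by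
      field_simp
      ring
    rw [neg_div]
    linarith [k1, k2, k3, k4]
  rw [key]
  have hb1 : |-((S₂ - 6 * S₃) * S₃) / (S₁ * d * (S₁ * d + S₃))|
      ≤ (2 * |(S₂ - 6 * S₃) * S₃| / S₁ ^ 2) / d ^ 2 := by
    rw [abs_div, abs_neg]
    rw [abs_of_pos (by positivity : (0:ℝ) < S₁ * d * (S₁ * d + S₃))]
    rw [div_le_div_iff₀ (by positivity) (by positivity)]
    have h7 : S₁ * d * (S₁ * d / 2) ≤ S₁ * d * (S₁ * d + S₃) :=
      mul_le_mul_of_nonneg_left hden (by positivity)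
    have h8 : 2 * |(S₂ - 6 * S₃) * S₃| / S₁ ^ 2 * (S₁ * d * (S₁ * d / 2))
        = |(S₂ - 6 * S₃) * S₃| * d ^ 2 := by
      field_simp
    calc |(S₂ - 6 * S₃) * S₃| * d ^ 2
        = 2 * |(S₂ - 6 * S₃) * S₃| / S₁ ^ 2 * (S₁ * d * (S₁ * d / 2)) := h8.symm
      _ ≤ 2 * |(S₂ - 6 * S₃) * S₃| / S₁ ^ 2 * (S₁ * d * (S₁ * d + S₃)) :=
        mul_le_mul_of_nonneg_left h7 (by positivity)
  have hb2 : |6 / (A * d * (2 * A * d + 1))| ≤ 6 / d ^ 2 := by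
    rw [abs_of_pos (by positivity)]
    rw [div_le_div_iff₀ (by positivity) (by positivity)]
    have hAd : 2 * d ≤ A * d := mul_le_mul_of_nonneg_right hA hd0.le
    nlinarith [mul_le_mul hAd hAd (by positivity) (by positivity), sq_nonneg d, hd0]
  calc |-((S₂ - 6 * S₃) * S₃) / (S₁ * d * (S₁ * d + S₃)) + 6 / (A * d * (2 * A * d + 1))|
      ≤ |-((S₂ - 6 * S₃) * S₃) / (S₁ * d * (S₁ * d + S₃))| + |6 / (A * d * (2 * A * d + 1))| :=
        abs_add_le _ _
    _ ≤ (2 * |(S₂ - 6 * S₃) * S₃| / S₁ ^ 2) / d ^ 2 + 6 / d ^ 2 := add_le_add hb1 hb2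
    _ = (2 * |(S₂ - 6 * S₃) * S₃| / S₁ ^ 2 + 6) / d ^ 2 := by rw [add_div]
end
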